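/- arXiv:2106.09829 — 8 statements merged into one kernel-verified Lean document; each statement's English description precedes it below -/
import Mathlib

section
/- Let G be a finite connected simple graph of order n ≥ 2 and size m. Then the independence number of the subdivision graph S(G) satisfies α(S(G)) = max{n, m}. -/
open SimpleGraph

lemma dist_decrease {V : Type*} (G : SimpleGraph V) (hconn : G.Connected)
    (W : Set V) (hW : W.Nonempty) (a : V) (ha : a ∉ W) :
    ∃ x, G.Adj a x ∧ sInf ((fun w => G.dist x w) '' W) + 1 = sInf ((fun w => G.dist a w) '' W) := by
  obtain ⟨w, hwW, hw⟩ := Nat.sInf_mem (hW.image (fun w => G.dist a w))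
  simp only at hw
  have hne : a ≠ w := fun h => ha (h ▸ hwW)
  have hpos : 0 < G.dist a w := hconn.pos_dist_of_ne hne
  obtain ⟨p, hp⟩ := (hconn a w).exists_walk_length_eq_dist
  cases p with
  | nil => exact absurd rfl hne
  | cons hadj q =>
    rename_i x
    refine ⟨x, hadj, ?_⟩
    have h1 : G.dist x w ≤ q.length := SimpleGraph.dist_le q
    have h2 : sInf ((fun w => G.dist x w) '' W) ≤ G.dist x w := Nat.sInf_le ⟨w, hwW, rfl⟩
    simp only [SimpleGraph.Walk.length_cons] at hp
    obtain ⟨w', hw'W, hw'⟩ := Nat.sInf_mem (hW.image (fun w => G.dist x w))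
    simp only at hw'
    obtain ⟨q', hq'⟩ := (hconn x w').exists_walk_length_eq_dist
    have h4 : G.dist a w' ≤ (SimpleGraph.Walk.cons hadj q').length := SimpleGraph.dist_le _
    have h3 : sInf ((fun w => G.dist a w) '' W) ≤ G.dist a w' := Nat.sInf_le ⟨w', hw'W, rfl⟩
    simp only [SimpleGraph.Walk.length_cons] at h4
    omega

/-- The subdivision graph `S(G)`: vertices are `V(G) ⊕ E(G)`, with `v ∈ V(G)` adjacent to
`e ∈ E(G)` iff `v` is an endpoint of `e`. -/
def subdivision {V : Type*} (G : SimpleGraph V) : SimpleGraph (V ⊕ G.edgeSet) where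
  Adj a b :=
    match a, b with
    | Sum.inl v, Sum.inr e => v ∈ (e : Sym2 V)
    | Sum.inr e, Sum.inl v => v ∈ (e : Sym2 V)
    | _, _ => False
  symm := ⟨by rintro (v | e) (w | f) h <;> simp_all⟩
  loopless := ⟨by rintro (v | e) h <;> simp_all⟩


/-- For a finite connected simple graph `G` of order `n ≥ 2` and size `m`,
`α(S(G)) = max {n, m}`, i.e. `max {n, m}` is the greatest cardinality of an independent set
of `S(G)`. -/
theorem indepNum_subdivision {V : Type*} [Fintype V] (G : SimpleGraph V)
    (hconn : G.Connected) (hn : 2 ≤ Fintype.card V) :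
    IsGreatest {k : ℕ | ∃ I : Set (V ⊕ G.edgeSet),
        (∀ a ∈ I, ∀ b ∈ I, ¬ (subdivision G).Adj a b) ∧ I.ncard = k}
      (max (Fintype.card V) G.edgeSet.ncard) := by
  classical
  have hfinE : Finite ↥G.edgeSet := inferInstance
  constructor
  · -- membership
    rcases le_total G.edgeSet.ncard (Fintype.card V) with h | h
    · rw [max_eq_left h]
      refine ⟨Set.range Sum.inl, ?_, ?_⟩
      · rintro _ ⟨a, rfl⟩ _ ⟨b, rfl⟩
        exact fun h => h
      · rw [← Nat.card_coe_set_eq, Nat.card_range_of_injective Sum.inl_injective,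
          Nat.card_eq_fintype_card]
    · rw [max_eq_right h]
      refine ⟨Set.range Sum.inr, ?_, ?_⟩
      · rintro _ ⟨a, rfl⟩ _ ⟨b, rfl⟩
        exact fun h => h
      · rw [← Nat.card_coe_set_eq, Nat.card_range_of_injective Sum.inr_injective,
          Nat.card_coe_set_eq]
  · -- upper bound
    rintro k ⟨I, hI, rfl⟩
    by_cases hB : ∃ e : G.edgeSet, Sum.inr e ∈ I
    · -- bound by m
      refine le_trans ?_ (le_max_right _ _)
      set W : Set V := {v | ∃ e : G.edgeSet, Sum.inr e ∈ I ∧ v ∈ (e : Sym2 V)} with hWdef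
      have hWne : W.Nonempty := by
        obtain ⟨e, he⟩ := hB
        exact ⟨(e : Sym2 V).out.1, e, he, Sym2.out_fst_mem _⟩
      have hA : ∀ a : V, Sum.inl a ∈ I → a ∉ W := by
        rintro a haI ⟨e, heI, hae⟩
        exact hI _ haI _ heI hae
      set d : V → ℕ := fun v => sInf ((fun w => G.dist v w) '' W) with hddef
      set F : V ⊕ G.edgeSet → G.edgeSet := fun z =>
        match z with
        | Sum.inr e => e
        | Sum.inl a =>
          if h : ∃ x, G.Adj a x ∧ d x + 1 = d a then
            ⟨s(a, h.choose), h.choose_spec.1⟩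
          else hB.choose
        with hFdef
      have hex : ∀ a : V, Sum.inl a ∈ I → ∃ x, G.Adj a x ∧ d x + 1 = d a := fun a haI =>
        dist_decrease G hconn W hWne a (hA a haI)
      have hmem : ∀ a : V, (h : ∃ x, G.Adj a x ∧ d x + 1 = d a) →
          a ∈ ((⟨s(a, h.choose), h.choose_spec.1⟩ : G.edgeSet) : Sym2 V) :=
        fun a h => Sym2.mem_mk_left _ _
      have key : I.ncard ≤ (Set.univ : Set G.edgeSet).ncard := by
        refine Set.ncard_le_ncard_of_injOn F (fun _ _ => Set.mem_univ _) ?_ (Set.toFinite _)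
        rintro (a | e) h₁ (b | f) h₂ heq
        · rw [hFdef] at heq
          simp only [dif_pos (hex a h₁), dif_pos (hex b h₂)] at heq
          have := Subtype.ext_iff.mp heq
          rw [Sym2.eq_iff] at this
          rcases this with ⟨rfl, -⟩ | ⟨h3, h4⟩
          · rfl
          · exfalso
            have s1 := (hex a h₁).choose_spec.2
            have s2 := (hex b h₂).choose_spec.2
            rw [h4] at s1
            rw [← h3] at s2
            omega
        · exfalso
          rw [hFdef] at heq
          simp only [dif_pos (hex a h₁)] at heq
          have hmem' : a ∈ (f : Sym2 V) := by
            rw [← heq]; exact Sym2.mem_mk_left _ _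
          exact hI _ h₁ _ h₂ hmem'
        · exfalso
          rw [hFdef] at heq
          simp only [dif_pos (hex b h₂)] at heq
          have hmem' : b ∈ (e : Sym2 V) := by
            rw [heq]; exact Sym2.mem_mk_left _ _
          exact hI _ h₂ _ h₁ hmem'
        · rw [hFdef] at heq
          simp only at heq
          rw [heq]
      rwa [Set.ncard_univ, Nat.card_coe_set_eq] at key
    · -- bound by n
      refine le_trans ?_ (le_max_left _ _)
      have hsub : I ⊆ Set.range Sum.inl := by
        rintro (a | e) hz
        · exact ⟨a, rfl⟩
        · exact absurd ⟨e, hz⟩ hB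
      calc I.ncard ≤ (Set.range (Sum.inl : V → V ⊕ G.edgeSet)).ncard :=
            Set.ncard_le_ncard hsub (Set.toFinite _)
        _ = Fintype.card V := by
            rw [← Nat.card_coe_set_eq, Nat.card_range_of_injective Sum.inl_injective,
              Nat.card_eq_fintype_card]
end

section
/- Let G be a finite connected simple graph of order n ≥ 2 and size m. Then the vertex-covering number of the subdivision graph S(G) satisfies τ(S(G)) = min{n, m}. -/
open SimpleGraph

section Aux

variable {V : Type*}

/-- Every non-root vertex in a connected graph has a neighbor strictly closer to the root. -/
lemma exists_parent (G : SimpleGraph V) (hconn : G.Connected) (r : V) :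
    ∃ par : V → V, ∀ v, v ≠ r → G.Adj v (par v) ∧ G.dist (par v) r + 1 = G.dist v r := by
  have h : ∀ v, ∃ w, (v ≠ r → G.Adj v w ∧ G.dist w r + 1 = G.dist v r) := by
    intro v
    by_cases hv : v = r
    · exact ⟨v, fun h => absurd hv h⟩
    · obtain ⟨p, hp⟩ := hconn.exists_walk_length_eq_dist v r
      cases p with
      | nil => exact absurd rfl hv
      | @cons _ u _ h q =>
        refine ⟨u, fun _ => ⟨h, ?_⟩⟩
        have h1 : G.dist u r ≤ q.length := SimpleGraph.dist_le q
        have h2 : G.dist v r ≤ G.dist u r + 1 := by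
          obtain ⟨q', hq'⟩ := (hconn u r).exists_walk_length_eq_dist
          have := SimpleGraph.dist_le (SimpleGraph.Walk.cons h q')
          simpa [hq'] using this
        simp only [SimpleGraph.Walk.length_cons] at hp
        omega
  choose par hpar using h
  exact ⟨par, fun v hv => hpar v hv⟩

lemma pS_inj (G : SimpleGraph V) {r : V} {par : V → V}
    (hpar : ∀ v, v ≠ r → G.Adj v (par v) ∧ G.dist (par v) r + 1 = G.dist v r)
    {v w : V} (hv : v ≠ r) (hw : w ≠ r)
    (h : s(v, par v) = s(w, par w)) : v = w := by
  rw [Sym2.eq_iff] at h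
  rcases h with ⟨h1, _⟩ | ⟨h1, h2⟩
  · exact h1
  · have hv' := (hpar v hv).2
    have hw' := (hpar w hw).2
    subst h1
    rw [h2] at hv'
    exact absurd hv' (by omega)

variable [Fintype V]

lemma card_ne_root (r : V) : Nat.card {v : V // v ≠ r} = Fintype.card V - 1 := by
  classical
  rw [Nat.card_eq_fintype_card]
  have : Fintype.card {v : V // ¬ v = r} = Fintype.card V - Fintype.card {v : V // v = r} :=
    Fintype.card_subtype_compl _
  simpa [Fintype.card_subtype_eq] using this

/-- If `n ≤ m` there is an injective choice of an incident edge for each vertex. -/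
lemma exists_vertex_injection (G : SimpleGraph V) (hconn : G.Connected)
    (hm : Fintype.card V ≤ G.edgeSet.ncard) :
    ∃ f : V → G.edgeSet, Function.Injective f ∧ ∀ v, v ∈ (f v : Sym2 V) := by
  classical
  obtain ⟨r⟩ := hconn.nonempty
  haveI : Nonempty V := ⟨r⟩
  obtain ⟨par, hpar⟩ := exists_parent G hconn r
  set pS : V → Sym2 V := fun v => s(v, par v) with hpS
  have pMem : ∀ v, v ≠ r → pS v ∈ G.edgeSet := fun v hv => (hpar v hv).1
  -- the injection on non-root vertices
  set p0 : {v : V // v ≠ r} → G.edgeSet := fun v => ⟨pS v.1, pMem v.1 v.2⟩ with hp0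
  have hp0inj : Function.Injective p0 := by
    intro u w h
    have : pS u.1 = pS w.1 := congrArg Subtype.val h
    exact Subtype.ext (pS_inj G hpar u.2 w.2 this)
  -- there is a spare edge
  have hcard : Nat.card G.edgeSet = G.edgeSet.ncard := Nat.card_coe_set_eq _
  have hnotsurj : ¬ Function.Surjective p0 := by
    intro hs
    have := Nat.card_le_card_of_surjective p0 hs
    rw [card_ne_root, hcard] at this
    have hpos : 0 < Fintype.card V := Fintype.card_pos
    omega
  rw [Function.Surjective] at hnotsurj
  push_neg at hnotsurj
  obtain ⟨e, he⟩ := hnotsurj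
  have hES : ∀ v, v ≠ r → pS v ≠ (e : Sym2 V) := by
    intro v hv hcontra
    exact he ⟨v, hv⟩ (Subtype.ext hcontra)
  -- pick an endpoint of the spare edge
  obtain ⟨⟨x, y⟩, hxy⟩ := Quot.exists_rep (e : Sym2 V)
  have hxe : x ∈ (e : Sym2 V) := by rw [← hxy]; exact Sym2.mem_mk_left x y
  set d := G.dist x r with hd
  set g : ℕ → V := fun k => par^[k] x with hg
  have F1 : ∀ k, k ≤ d → G.dist (g k) r = d - k := by
    intro k
    induction k with
    | zero => intro _; simp [hg, hd]
    | succ k ih =>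
      intro hk
      have hdk := ih (by omega)
      have hgr : g k ≠ r := by
        intro hcon
        rw [hcon, SimpleGraph.dist_self] at hdk
        omega
      have hstep := (hpar (g k) hgr).2
      have : g (k + 1) = par (g k) := Function.iterate_succ_apply' par k x
      rw [this]
      omega
  have hgd : g d = r := by
    have := F1 d le_rfl
    simp only [Nat.sub_self] at this
    exact hconn.dist_eq_zero_iff.mp this
  have F2 : ∀ k, k ≤ d → ∀ l, l ≤ d → g k = g l → k = l := by
    intro k hk l hl hkl
    have h1 := F1 k hk
    have h2 := F1 l hl
    rw [hkl] at h1
    omega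
  have hPr : ∃ k, k ≤ d ∧ g k = r := ⟨d, le_rfl, hgd⟩
  set f : V → Sym2 V := fun v =>
    if h : ∃ k, k ≤ d ∧ g k = v then
      (if Nat.find h = 0 then (e : Sym2 V) else pS (g (Nat.find h - 1)))
    else pS v with hf
  have hprev_ne : ∀ k, 1 ≤ k → k ≤ d → g (k - 1) ≠ r := by
    intro k h1 h2 hcon
    have := F1 (k - 1) (by omega)
    rw [hcon, SimpleGraph.dist_self] at this
    omega
  have hstep_eq : ∀ k, 1 ≤ k → g k = par (g (k - 1)) := by
    intro k h1
    conv_lhs => rw [show k = (k - 1) + 1 by omega]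
    exact Function.iterate_succ_apply' par (k - 1) x
  have hmem : ∀ v, v ∈ f v ∧ f v ∈ G.edgeSet := by
    intro v
    by_cases h : ∃ k, k ≤ d ∧ g k = v
    · simp only [hf, dif_pos h]
      obtain ⟨N, hN⟩ : ∃ N, Nat.find h = N := ⟨_, rfl⟩
      have hspec := Nat.find_spec h
      rw [hN] at hspec ⊢
      obtain ⟨hkd, hkv⟩ := hspec
      by_cases hk0 : N = 0
      · rw [if_pos hk0]
        rw [hk0] at hkv
        have hvx : v = x := by simpa [hg] using hkv.symm
        rw [hvx]
        exact ⟨hxe, e.2⟩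
      · rw [if_neg hk0]
        have h1 : 1 ≤ N := by omega
        have hu := hprev_ne N h1 hkd
        refine ⟨?_, pMem _ hu⟩
        have hvp : v = par (g (N - 1)) := hkv.symm.trans (hstep_eq N h1)
        rw [hvp]
        exact Sym2.mem_mk_right _ _
    · simp only [hf, dif_neg h]
      have hv : v ≠ r := by
        intro hcon
        exact h (hcon ▸ hPr)
      exact ⟨Sym2.mem_mk_left _ _, pMem v hv⟩
  have hinj : Function.Injective f := by
    intro u w huw
    by_cases hu : ∃ k, k ≤ d ∧ g k = u <;> by_cases hw : ∃ k, k ≤ d ∧ g k = w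
    · -- both on chain
      obtain ⟨hkd, hku⟩ := Nat.find_spec hu
      obtain ⟨hld, hlw⟩ := Nat.find_spec hw
      simp only [hf, dif_pos hu, dif_pos hw] at huw
      by_cases hk0 : Nat.find hu = 0 <;> by_cases hl0 : Nat.find hw = 0
      · rw [← hku, ← hlw, hk0, hl0]
      · rw [if_pos hk0, if_neg hl0] at huw
        exact absurd huw.symm (hES _ (hprev_ne _ (by omega) hld))
      · rw [if_neg hk0, if_pos hl0] at huw
        exact absurd huw (hES _ (hprev_ne _ (by omega) hkd))
      · rw [if_neg hk0, if_neg hl0] at huw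
        have := pS_inj G hpar (hprev_ne _ (by omega) hkd) (hprev_ne _ (by omega) hld) huw
        have hkl : Nat.find hu = Nat.find hw :=
          have := F2 (Nat.find hu - 1) (by omega) (Nat.find hw - 1) (by omega) this
          by omega
        rw [← hku, ← hlw, hkl]
    · obtain ⟨hkd, hku⟩ := Nat.find_spec hu
      simp only [hf, dif_pos hu, dif_neg hw] at huw
      have hwr : w ≠ r := fun hcon => hw (hcon ▸ hPr)
      by_cases hk0 : Nat.find hu = 0
      · rw [if_pos hk0] at huw
        exact absurd huw.symm (hES w hwr)
      · rw [if_neg hk0] at huw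
        have := pS_inj G hpar (hprev_ne _ (by omega) hkd) hwr huw
        exact absurd ⟨Nat.find hu - 1, by omega, this⟩ hw
    · obtain ⟨hld, hlw⟩ := Nat.find_spec hw
      simp only [hf, dif_neg hu, dif_pos hw] at huw
      have hur : u ≠ r := fun hcon => hu (hcon ▸ hPr)
      by_cases hl0 : Nat.find hw = 0
      · rw [if_pos hl0] at huw
        exact absurd huw (hES u hur)
      · rw [if_neg hl0] at huw
        have := pS_inj G hpar hur (hprev_ne _ (by omega) hld) huw
        exact absurd ⟨Nat.find hw - 1, by omega, this.symm⟩ hu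
    · simp only [hf, dif_neg hu, dif_neg hw] at huw
      exact pS_inj G hpar (fun hcon => hu (hcon ▸ hPr)) (fun hcon => hw (hcon ▸ hPr)) huw
  refine ⟨fun v => ⟨f v, (hmem v).2⟩, ?_, fun v => (hmem v).1⟩
  intro u w h
  exact hinj (congrArg Subtype.val h)

/-- If `m < n` there is an injective choice of an endpoint for each edge. -/
lemma exists_edge_injection (G : SimpleGraph V) (hconn : G.Connected)
    (hm : G.edgeSet.ncard < Fintype.card V) :
    ∃ g : G.edgeSet → V, Function.Injective g ∧ ∀ e : G.edgeSet, g e ∈ (e : Sym2 V) := by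
  classical
  obtain ⟨r⟩ := hconn.nonempty
  obtain ⟨par, hpar⟩ := exists_parent G hconn r
  set p0 : {v : V // v ≠ r} → G.edgeSet :=
    fun v => ⟨s(v.1, par v.1), (hpar v.1 v.2).1⟩ with hp0
  have hp0inj : Function.Injective p0 := by
    intro u w h
    exact Subtype.ext (pS_inj G hpar u.2 w.2 (congrArg Subtype.val h))
  have hcard : Nat.card G.edgeSet = G.edgeSet.ncard := Nat.card_coe_set_eq _
  have hle : Nat.card {v : V // v ≠ r} ≤ Nat.card G.edgeSet :=
    Nat.card_le_card_of_injective p0 hp0inj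
  rw [card_ne_root, hcard] at hle
  have hbij : Function.Bijective p0 := by
    rw [Nat.bijective_iff_injective_and_card]
    exact ⟨hp0inj, by rw [card_ne_root, hcard]; omega⟩
  set E := Equiv.ofBijective p0 hbij with hE
  refine ⟨fun e => (E.symm e).1, ?_, ?_⟩
  · intro e1 e2 h
    have := E.symm.injective (Subtype.ext h)
    rw [this]
  · intro e
    have : p0 (E.symm e) = e := E.apply_symm_apply e
    have hval : s((E.symm e).1, par (E.symm e).1) = (e : Sym2 V) :=
      congrArg Subtype.val this
    rw [← hval]
    exact Sym2.mem_mk_left _ _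

end Aux

/-- For a finite connected simple graph `G` of order `n ≥ 2` and size `m`,
`τ(S(G)) = min {n, m}`, i.e. `min {n, m}` is the least cardinality of a vertex cover
of `S(G)`. -/
theorem vertexCoverNum_subdivision {V : Type*} [Fintype V] (G : SimpleGraph V)
    (hconn : G.Connected) (hn : 2 ≤ Fintype.card V) :
    IsLeast {k : ℕ | ∃ C : Set (V ⊕ G.edgeSet),
        (∀ a b, (subdivision G).Adj a b → a ∈ C ∨ b ∈ C) ∧ C.ncard = k}
      (min (Fintype.card V) G.edgeSet.ncard) := by
  classical
  constructor
  · -- membership: an optimal cover exists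
    rcases le_total (Fintype.card V) G.edgeSet.ncard with hnm | hnm
    · rw [min_eq_left hnm]
      refine ⟨Set.range Sum.inl, ?_, ?_⟩
      · rintro (v | e) (w | e') hadj
        · exact hadj.elim
        · exact Or.inl (Set.mem_range_self v)
        · exact Or.inr (Set.mem_range_self w)
        · exact hadj.elim
      · rw [← Nat.card_coe_set_eq, Nat.card_range_of_injective Sum.inl_injective,
          Nat.card_eq_fintype_card]
    · rw [min_eq_right hnm]
      refine ⟨Set.range Sum.inr, ?_, ?_⟩
      · rintro (v | e) (w | e') hadj
        · exact hadj.elim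
        · exact Or.inr (Set.mem_range_self e')
        · exact Or.inl (Set.mem_range_self e)
        · exact hadj.elim
      · rw [← Nat.card_coe_set_eq, Nat.card_range_of_injective Sum.inr_injective,
          Nat.card_coe_set_eq]
  · -- lower bound
    rintro k ⟨C, hC, hCk⟩
    have hCfin : Finite ↥C := by
      have : Finite (V ⊕ G.edgeSet) := by infer_instance
      infer_instance
    have hCcard : Nat.card ↥C = k := by rw [Nat.card_coe_set_eq, hCk]
    rcases le_or_gt (Fintype.card V) G.edgeSet.ncard with hnm | hnm
    · -- min = n; inject V into C
      obtain ⟨f, hfinj, hfmem⟩ := exists_vertex_injection G hconn hnm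
      set F : V → ↥C := fun v =>
        if h : Sum.inl v ∈ C then ⟨Sum.inl v, h⟩
        else ⟨Sum.inr (f v), by
          rcases hC (Sum.inl v) (Sum.inr (f v)) (hfmem v) with h' | h'
          · exact absurd h' h
          · exact h'⟩ with hF
      have hFinj : Function.Injective F := by
        intro u w h
        simp only [hF] at h
        by_cases hu : Sum.inl u ∈ C <;> by_cases hw : Sum.inl w ∈ C <;>
          simp only [dif_pos, dif_neg, hu, hw] at h
        · exact Sum.inl_injective (congrArg Subtype.val h)
        · exact absurd (congrArg Subtype.val h) (by simp)
        · exact absurd (congrArg Subtype.val h) (by simp)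
        · exact hfinj (Sum.inr_injective (congrArg Subtype.val h))
      have := Nat.card_le_card_of_injective F hFinj
      rw [Nat.card_eq_fintype_card, hCcard] at this
      exact le_trans (min_le_left _ _) this
    · -- min = m; inject E into C
      obtain ⟨g, hginj, hgmem⟩ := exists_edge_injection G hconn hnm
      set F : G.edgeSet → ↥C := fun e =>
        if h : Sum.inr e ∈ C then ⟨Sum.inr e, h⟩
        else ⟨Sum.inl (g e), by
          rcases hC (Sum.inl (g e)) (Sum.inr e) (hgmem e) with h' | h'
          · exact h'
          · exact absurd h' h⟩ with hF
      have hFinj : Function.Injective F := by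
        intro u w h
        simp only [hF] at h
        by_cases hu : Sum.inr u ∈ C <;> by_cases hw : Sum.inr w ∈ C <;>
          simp only [dif_pos, dif_neg, hu, hw] at h
        · exact Sum.inr_injective (congrArg Subtype.val h)
        · exact absurd (congrArg Subtype.val h) (by simp)
        · exact absurd (congrArg Subtype.val h) (by simp)
        · exact hginj (Sum.inl_injective (congrArg Subtype.val h))
      have := Nat.card_le_card_of_injective F hFinj
      rw [Nat.card_coe_set_eq, hCcard] at this
      exact le_trans (min_le_right _ _) this
end

section
/- Let G be a finite connected simple graph of order n ≥ 2 and size m, with subdivision graph S(G), and let V denote the set of vertices of S(G) coming from V(G) and S the set of vertices of S(G) coming from E(G). The following statements are equivalent: (i) G contains at most one cycle; (ii) α(S(G)) = |V| = n; (iii) τ(S(G)) = |S| = m. -/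
/-- A subgraph `H` of `G` is a cycle if it is connected (in particular nonempty) and every
vertex of `H` has exactly two neighbours in `H`; for finite graphs this characterizes the
cycle graphs. -/
def SimpleGraph.Subgraph.IsCycleSubgraph {V : Type*} {G : SimpleGraph V}
    (H : G.Subgraph) : Prop :=
  H.coe.Connected ∧ ∀ v ∈ H.verts, (H.neighborSet v).ncard = 2


section Aux

open SimpleGraph Set

variable {V : Type*} [Fintype V] {G : SimpleGraph V}

lemma exists_step (hconn : G.Connected) {s t : V} (h : s ≠ t) :
    ∃ x, G.Adj s x ∧ G.dist x t + 1 = G.dist s t := by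
  obtain ⟨p, hp⟩ := (hconn.preconnected s t).exists_walk_length_eq_dist
  have hpos : 0 < G.dist s t := hconn.pos_dist_of_ne h
  cases p with
  | nil => exact absurd rfl h
  | cons hadj q =>
    rename_i x
    refine ⟨x, hadj, ?_⟩
    have h1 : G.dist x t ≤ q.length := SimpleGraph.dist_le q
    have h2 : G.dist s t ≤ G.dist s x + G.dist x t := hconn.dist_triangle
    have h3 : G.dist s x ≤ 1 := by
      have := SimpleGraph.dist_le (Walk.cons hadj Walk.nil)
      simpa using this
    simp only [Walk.length_cons] at hp
    omega

/-- choice of a "next vertex towards `t`" edge for each vertex `≠ t`. -/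
lemma exists_inj (hconn : G.Connected) (t : V) :
    ∃ f : V → Sym2 V,
      (∀ s, s ≠ t → ∃ x, f s = s(s, x) ∧ G.Adj s x ∧ G.dist x t + 1 = G.dist s t) ∧
      (∀ s₁ s₂, s₁ ≠ t → s₂ ≠ t → f s₁ = f s₂ → s₁ = s₂) := by
  classical
  choose x hx1 hx2 using fun s (h : s ≠ t) => exists_step hconn h
  refine ⟨fun s => if h : s = t then s(t, t) else s(s, x s h), ?_, ?_⟩
  · intro s h
    refine ⟨x s h, by simp [h], hx1 s h, hx2 s h⟩
  · intro s₁ s₂ h₁ h₂ heq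
    simp only [h₁, h₂, dif_neg, not_false_iff] at heq
    rw [Sym2.eq_iff] at heq
    rcases heq with ⟨h, -⟩ | ⟨ha, hb⟩
    · exact h
    · exfalso
      have e1 := hx2 s₁ h₁
      have e2 := hx2 s₂ h₂
      rw [hb] at e1
      rw [show G.dist (x s₂ h₂) t = G.dist s₁ t from by rw [ha]] at e2
      omega

set_option linter.unusedSectionVars false

lemma coreB (hconn : G.Connected) (hm : G.edgeSet.ncard ≤ Fintype.card V) (W : Set V) :
    {e | e ∈ G.edgeSet ∧ ∀ v ∈ e, v ∈ W}.ncard ≤ W.ncard := by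
  classical
  by_cases hWu : W = Set.univ
  · subst hWu
    calc {e | e ∈ G.edgeSet ∧ ∀ v ∈ e, v ∈ (Set.univ : Set V)}.ncard
        ≤ G.edgeSet.ncard := Set.ncard_le_ncard (fun e he => he.1) G.edgeSet.toFinite
      _ ≤ Fintype.card V := hm
      _ = (Set.univ : Set V).ncard := by simp [Set.ncard_univ]
  by_cases hW : W = ∅
  · subst hW
    have : {e | e ∈ G.edgeSet ∧ ∀ v ∈ e, v ∈ (∅ : Set V)} = ∅ := by
      ext e
      induction e with
      | _ a b => simp only [Set.mem_setOf_eq, Set.mem_empty_iff_false, iff_false, not_and]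
                 intro _ h
                 exact (h a (by simp))
    rw [this]
    simp
  · obtain ⟨t, ht⟩ := Set.nonempty_iff_ne_empty.2 hW
    obtain ⟨f, hf, hfinj⟩ := exists_inj hconn t
    set S := Wᶜ with hS
    have htS : t ∉ S := by simp [hS, ht]
    have hSA : ∀ s ∈ S, s ≠ t := fun s hs => fun h => htS (h ▸ hs)
    set A := {e | e ∈ G.edgeSet ∧ ∀ v ∈ e, v ∈ W} with hA
    set B := f '' S with hB
    have hBsub : B ⊆ G.edgeSet := by
      rintro _ ⟨s, hs, rfl⟩
      obtain ⟨x, hfx, hadj, -⟩ := hf s (hSA s hs)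
      rw [hfx]; exact hadj
    have hdisj : Disjoint A B := by
      rw [Set.disjoint_left]
      rintro e heA ⟨s, hs, rfl⟩
      obtain ⟨x, hfx, -, -⟩ := hf s (hSA s hs)
      have : s ∈ W := heA.2 s (by rw [hfx]; simp)
      exact hs this
    have hcardB : B.ncard = S.ncard :=
      Set.ncard_image_of_injOn (fun a ha b hb h => hfinj a b (hSA a ha) (hSA b hb) h)
    have hun : (A ∪ B).ncard = A.ncard + B.ncard :=
      Set.ncard_union_eq hdisj (A.toFinite) (B.toFinite)
    have hunsub : (A ∪ B).ncard ≤ G.edgeSet.ncard :=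
      Set.ncard_le_ncard (Set.union_subset (fun e he => he.1) hBsub) G.edgeSet.toFinite
    have hcompl : W.ncard + S.ncard = Fintype.card V := by
      rw [hS]
      have := Set.ncard_add_ncard_compl W
      simpa [Nat.card_eq_fintype_card] using this
    omega

lemma subgraph_handshake (H : G.Subgraph) [Fintype ↥H.verts] :
    ∑ v : ↥H.verts, (H.neighborSet ↑v).ncard = 2 * H.edgeSet.ncard := by
  classical
  haveI : DecidableRel H.coe.Adj := fun a b => Classical.dec _
  have key := H.coe.sum_degrees_eq_twice_card_edges
  have h1 : ∀ (v : ↥H.verts) (inst : Fintype ↥(H.coe.neighborSet v)),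
      @SimpleGraph.degree _ H.coe v inst = (H.neighborSet ↑v).ncard := by
    intro v inst
    rw [← SimpleGraph.card_neighborSet_eq_degree]
    rw [Fintype.card_congr (SimpleGraph.Subgraph.coeNeighborSetEquiv v)]
    rw [← Nat.card_coe_set_eq, Nat.card_eq_fintype_card]
  have h2 : (H.coe.edgeFinset).card = H.edgeSet.ncard := by
    rw [SimpleGraph.edgeFinset_card]
    rw [← Nat.card_eq_fintype_card, Nat.card_coe_set_eq]
    rw [← SimpleGraph.Subgraph.image_coe_edgeSet_coe]
    rw [Set.ncard_image_of_injective _ (Sym2.map.injective Subtype.coe_injective)]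
  rw [← h2]
  rw [← key]
  exact Finset.sum_congr rfl (fun v _ => (h1 v _).symm)

lemma cycle_edge_count {H : G.Subgraph} (h : H.IsCycleSubgraph) :
    H.edgeSet.ncard = H.verts.ncard := by
  classical
  haveI : Fintype ↥H.verts := H.verts.toFinite.fintype
  have key := subgraph_handshake H
  have h1 : ∀ v : ↥H.verts, (H.neighborSet ↑v).ncard = 2 := fun v => h.2 ↑v v.2
  rw [Finset.sum_congr rfl (fun v _ => (h1 v))] at key
  simp only [Finset.sum_const, smul_eq_mul, Finset.card_univ] at key
  have h2 : Fintype.card ↥H.verts = H.verts.ncard := by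
    rw [← Nat.card_eq_fintype_card, Nat.card_coe_set_eq]
  omega

lemma cycles_eq {H1 H2 : G.Subgraph} (h1 : H1.IsCycleSubgraph) (h2 : H2.IsCycleSubgraph)
    {t : V} (ht1 : t ∈ H1.verts) (ht2 : t ∈ H2.verts)
    (hdeg : ∀ v ∈ (H1 ⊔ H2).verts, ((H1 ⊔ H2).neighborSet v).ncard = 2) : H1 = H2 := by
  have hN1 : ∀ v ∈ H1.verts, H1.neighborSet v = (H1 ⊔ H2).neighborSet v := by
    intro v hv
    refine Set.eq_of_subset_of_ncard_le (fun w hw => Or.inl hw) ?_ (Set.toFinite _)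
    rw [hdeg v (Or.inl hv), h1.2 v hv]
  have hN2 : ∀ v ∈ H2.verts, H2.neighborSet v = (H1 ⊔ H2).neighborSet v := by
    intro v hv
    refine Set.eq_of_subset_of_ncard_le (fun w hw => Or.inr hw) ?_ (Set.toFinite _)
    rw [hdeg v (Or.inr hv), h2.2 v hv]
  have aux1 : ∀ {a b : ↥H1.verts} (p : H1.coe.Walk a b), (a : V) ∈ H2.verts →
      (b : V) ∈ H2.verts := by
    intro a b p
    induction p with
    | nil => exact id
    | @cons a' x' b' h q ih =>
      intro ha
      apply ih
      have hadj : H1.Adj ↑a' ↑x' := h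
      have hx : (↑x' : V) ∈ H1.neighborSet ↑a' := hadj
      rw [hN1 _ a'.2, ← hN2 _ ha] at hx
      exact H2.edge_vert (H2.adj_symm hx)
  have aux2 : ∀ {a b : ↥H2.verts} (p : H2.coe.Walk a b), (a : V) ∈ H1.verts →
      (b : V) ∈ H1.verts := by
    intro a b p
    induction p with
    | nil => exact id
    | @cons a' x' b' h q ih =>
      intro ha
      apply ih
      have hadj : H2.Adj ↑a' ↑x' := h
      have hx : (↑x' : V) ∈ H2.neighborSet ↑a' := hadj
      rw [hN2 _ a'.2, ← hN1 _ ha] at hx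
      exact H1.edge_vert (H1.adj_symm hx)
  have sub1 : H1.verts ⊆ H2.verts := by
    intro u hu
    obtain ⟨p⟩ := (h1.1).preconnected ⟨t, ht1⟩ ⟨u, hu⟩
    exact aux1 p ht2
  have sub2 : H2.verts ⊆ H1.verts := by
    intro u hu
    obtain ⟨p⟩ := (h2.1).preconnected ⟨t, ht2⟩ ⟨u, hu⟩
    exact aux2 p ht1
  have hverts : H1.verts = H2.verts := Set.Subset.antisymm sub1 sub2
  apply SimpleGraph.Subgraph.ext hverts
  ext x y
  constructor
  · intro h
    have hx1 : x ∈ H1.verts := H1.edge_vert h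
    have : y ∈ H1.neighborSet x := h
    rwa [hN1 _ hx1, ← hN2 _ (sub1 hx1)] at this
  · intro h
    have hx2 : x ∈ H2.verts := H2.edge_vert h
    have : y ∈ H2.neighborSet x := h
    rwa [hN2 _ hx2, ← hN1 _ (sub2 hx2)] at this

lemma count_main (hconn : G.Connected) (K : G.Subgraph) {t : V} (ht : t ∈ K.verts) :
    K.edgeSet.ncard + ((Fintype.card V) - K.verts.ncard) ≤ G.edgeSet.ncard := by
  classical
  have hcompl : K.verts.ncard + K.vertsᶜ.ncard = Fintype.card V := by
    have := Set.ncard_add_ncard_compl K.verts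
    simpa [Nat.card_eq_fintype_card] using this
  obtain ⟨f, hf, hfinj⟩ := exists_inj hconn t
  set S := K.vertsᶜ with hS
  have hSA : ∀ s ∈ S, s ≠ t := fun s hs h => hs (h ▸ ht)
  set B := f '' S with hB
  have hBsub : B ⊆ G.edgeSet := by
    rintro _ ⟨s, hs, rfl⟩
    obtain ⟨x, hfx, hadj, -⟩ := hf s (hSA s hs)
    rw [hfx]; exact hadj
  have hdisj : Disjoint K.edgeSet B := by
    rw [Set.disjoint_left]
    rintro e heK ⟨s, hs, rfl⟩
    obtain ⟨x, hfx, -, -⟩ := hf s (hSA s hs)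
    have : s ∈ K.verts := K.mem_verts_of_mem_edge heK (by rw [hfx]; simp)
    exact hs this
  have hcardB : B.ncard = S.ncard :=
    Set.ncard_image_of_injOn (fun a ha b hb h => hfinj a b (hSA a ha) (hSA b hb) h)
  have hun : (K.edgeSet ∪ B).ncard = K.edgeSet.ncard + B.ncard :=
    Set.ncard_union_eq hdisj (Set.toFinite _) (Set.toFinite _)
  have hunsub : (K.edgeSet ∪ B).ncard ≤ G.edgeSet.ncard :=
    Set.ncard_le_ncard (Set.union_subset K.edgeSet_subset hBsub) (Set.toFinite _)
  omega

lemma coreA (hconn : G.Connected) {H1 H2 : G.Subgraph} (h1 : H1.IsCycleSubgraph)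
    (h2 : H2.IsCycleSubgraph) (hne : H1 ≠ H2) :
    Fintype.card V + 1 ≤ G.edgeSet.ncard := by
  classical
  have hv1 : H1.verts.Nonempty := Set.nonempty_coe_sort.mp (h1.1).nonempty
  have hv2 : H2.verts.Nonempty := Set.nonempty_coe_sort.mp (h2.1).nonempty
  have hvK : ∀ v, v ∈ (H1 ⊔ H2).verts ↔ v ∈ H1.verts ∪ H2.verts := by
    intro v; rw [SimpleGraph.Subgraph.verts_sup]
  have hge2 : ∀ v ∈ (H1 ⊔ H2).verts, 2 ≤ ((H1 ⊔ H2).neighborSet v).ncard := by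
    intro v hv
    rcases (hvK v).mp hv with hv' | hv'
    · rw [← h1.2 v hv']
      exact Set.ncard_le_ncard (fun w hw => Or.inl hw) (Set.toFinite _)
    · rw [← h2.2 v hv']
      exact Set.ncard_le_ncard (fun w hw => Or.inr hw) (Set.toFinite _)
  have hvcard : (H1 ⊔ H2).verts.ncard ≤ Fintype.card V := by
    have huniv : (Set.univ : Set V).ncard = Fintype.card V := by
      rw [Set.ncard_univ, Nat.card_eq_fintype_card]
    rw [← huniv]
    exact Set.ncard_le_ncard (Set.subset_univ _) (Set.toFinite _)
  by_cases hshared : (H1.verts ∩ H2.verts).Nonempty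
  · obtain ⟨t, ht1, ht2⟩ := hshared
    have hex : ∃ w ∈ (H1 ⊔ H2).verts, 3 ≤ ((H1 ⊔ H2).neighborSet w).ncard := by
      by_contra hno
      push_neg at hno
      refine hne (cycles_eq h1 h2 ht1 ht2 (fun v hv => ?_))
      have := hno v hv
      have := hge2 v hv
      omega
    obtain ⟨w, hw, hw3⟩ := hex
    haveI : Fintype ↥(H1 ⊔ H2).verts := ((H1 ⊔ H2).verts.toFinite).fintype
    have hsum := subgraph_handshake (H1 ⊔ H2)
    have hucard : Fintype.card ↥(H1 ⊔ H2).verts = (H1 ⊔ H2).verts.ncard := by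
      rw [← Nat.card_eq_fintype_card, Nat.card_coe_set_eq]
    have hsum_ge : 2 * (H1 ⊔ H2).verts.ncard + 1 ≤
        ∑ v : ↥(H1 ⊔ H2).verts, ((H1 ⊔ H2).neighborSet ↑v).ncard := by
      rw [← Finset.add_sum_erase _ _ (Finset.mem_univ (⟨w, hw⟩ : ↥(H1 ⊔ H2).verts))]
      have hrest : (Finset.univ.erase (⟨w, hw⟩ : ↥(H1 ⊔ H2).verts)).card • 2 ≤
          ∑ v ∈ Finset.univ.erase (⟨w, hw⟩ : ↥(H1 ⊔ H2).verts),
            ((H1 ⊔ H2).neighborSet ↑v).ncard :=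
        Finset.card_nsmul_le_sum _ _ _ (fun v _ => hge2 ↑v v.2)
      have hcarderase : (Finset.univ.erase (⟨w, hw⟩ : ↥(H1 ⊔ H2).verts)).card =
          (H1 ⊔ H2).verts.ncard - 1 := by
        rw [Finset.card_erase_of_mem (Finset.mem_univ _), Finset.card_univ, hucard]
      have hpos : 0 < (H1 ⊔ H2).verts.ncard :=
        (Set.ncard_pos (Set.toFinite _)).mpr ⟨w, hw⟩
      have hw3' : 3 ≤ ((H1 ⊔ H2).neighborSet
          ↑(⟨w, hw⟩ : ↥(H1 ⊔ H2).verts)).ncard := hw3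
      simp only [smul_eq_mul] at hrest
      omega
    have hekey : (H1 ⊔ H2).verts.ncard + 1 ≤ (H1 ⊔ H2).edgeSet.ncard := by omega
    have hcount := count_main hconn (H1 ⊔ H2) ((hvK t).mpr (Or.inl ht1))
    have hcompl : (H1 ⊔ H2).verts.ncard + (H1 ⊔ H2).vertsᶜ.ncard = Fintype.card V := by
      have := Set.ncard_add_ncard_compl (H1 ⊔ H2).verts
      simpa [Nat.card_eq_fintype_card] using this
    omega
  · -- disjoint case
    have hd : H1.verts ∩ H2.verts = ∅ := Set.not_nonempty_iff_eq_empty.mp hshared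
    have he1 := cycle_edge_count h1
    have he2 := cycle_edge_count h2
    have hdisjv : Disjoint H1.verts H2.verts := Set.disjoint_iff_inter_eq_empty.mpr hd
    have hvcardK : (H1 ⊔ H2).verts.ncard = H1.verts.ncard + H2.verts.ncard := by
      rw [SimpleGraph.Subgraph.verts_sup]
      exact Set.ncard_union_eq hdisjv (Set.toFinite _) (Set.toFinite _)
    have hdisje : Disjoint H1.edgeSet H2.edgeSet := by
      rw [Set.disjoint_left]
      intro e he1' he2'
      induction e with
      | _ a b =>
        have ha1 : a ∈ H1.verts := H1.mem_verts_of_mem_edge he1' (by simp)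
        have ha2 : a ∈ H2.verts := H2.mem_verts_of_mem_edge he2' (by simp)
        exact Set.eq_empty_iff_forall_notMem.mp hd a ⟨ha1, ha2⟩
    have hecardK : (H1 ⊔ H2).edgeSet.ncard = H1.edgeSet.ncard + H2.edgeSet.ncard := by
      rw [SimpleGraph.Subgraph.edgeSet_sup]
      exact Set.ncard_union_eq hdisje (Set.toFinite _) (Set.toFinite _)
    obtain ⟨t, ht1⟩ := hv1
    have htK : t ∈ (H1 ⊔ H2).verts := (hvK t).mpr (Or.inl ht1)
    obtain ⟨a, haH2, hamin⟩ := Set.exists_min_image H2.verts (fun b => G.dist b t)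
      (Set.toFinite _) hv2
    have hat : a ≠ t := by
      intro h
      exact Set.eq_empty_iff_forall_notMem.mp hd t ⟨ht1, h ▸ haH2⟩
    obtain ⟨x, hadj, hdist⟩ := exists_step hconn hat
    have hdistpos : 0 < G.dist a t := hconn.pos_dist_of_ne hat
    have hxH2 : x ∉ H2.verts := by
      intro hx
      have := hamin x hx
      omega
    have hεK : s(a, x) ∉ (H1 ⊔ H2).edgeSet := by
      rw [SimpleGraph.Subgraph.edgeSet_sup]
      rintro (h | h)
      · have : a ∈ H1.verts := H1.edge_vert h
        exact Set.eq_empty_iff_forall_notMem.mp hd a ⟨this, haH2⟩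
      · exact hxH2 (H2.edge_vert (H2.adj_symm h))
    -- injection
    obtain ⟨f, hf, hfinj⟩ := exists_inj hconn t
    set S := (H1 ⊔ H2).vertsᶜ with hS
    have hSA : ∀ s ∈ S, s ≠ t := fun s hs h => hs (h ▸ htK)
    set B := f '' S with hB
    have hBsub : B ⊆ G.edgeSet := by
      rintro _ ⟨s, hs, rfl⟩
      obtain ⟨y, hfy, hadj', -⟩ := hf s (hSA s hs)
      rw [hfy]; exact hadj'
    have hdisjKB : Disjoint (H1 ⊔ H2).edgeSet B := by
      rw [Set.disjoint_left]
      rintro e heK ⟨s, hs, rfl⟩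
      obtain ⟨y, hfy, -, -⟩ := hf s (hSA s hs)
      exact hs ((H1 ⊔ H2).mem_verts_of_mem_edge heK (by rw [hfy]; simp))
    have hεB : s(a, x) ∉ B := by
      rintro ⟨s, hs, hfs⟩
      obtain ⟨y, hfy, -, hydist⟩ := hf s (hSA s hs)
      rw [hfy] at hfs
      rw [Sym2.eq_iff] at hfs
      rcases hfs with ⟨hsa, -⟩ | ⟨hsx, hya⟩
      · exact hs (hsa ▸ ((hvK a).mpr (Or.inr haH2)))
      · rw [show G.dist y t = G.dist a t from by rw [hya]] at hydist
        rw [show G.dist s t = G.dist x t from by rw [hsx]] at hydist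
        omega
    have hcardB : B.ncard = S.ncard :=
      Set.ncard_image_of_injOn (fun p hp q hq h => hfinj p q (hSA p hp) (hSA q hq) h)
    have hun : ((H1 ⊔ H2).edgeSet ∪ B).ncard = (H1 ⊔ H2).edgeSet.ncard + B.ncard :=
      Set.ncard_union_eq hdisjKB (Set.toFinite _) (Set.toFinite _)
    have hins : (insert s(a, x) ((H1 ⊔ H2).edgeSet ∪ B)).ncard =
        ((H1 ⊔ H2).edgeSet ∪ B).ncard + 1 := by
      rw [Set.ncard_insert_of_notMem (by
        rintro (h | h)
        · exact hεK h
        · exact hεB h) (Set.toFinite _)]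
    have hsubm : (insert s(a, x) ((H1 ⊔ H2).edgeSet ∪ B)).ncard ≤ G.edgeSet.ncard := by
      refine Set.ncard_le_ncard ?_ (Set.toFinite _)
      refine Set.insert_subset hadj (Set.union_subset (H1 ⊔ H2).edgeSet_subset hBsub)
    have hcompl : (H1 ⊔ H2).verts.ncard + S.ncard = Fintype.card V := by
      have h0 := Set.ncard_add_ncard_compl (H1 ⊔ H2).verts
      rw [Nat.card_eq_fintype_card] at h0
      rw [hS]
      exact h0
    omega

lemma nbhd_empty_of_not_mem_support {a b w : V} (p : G.Walk a b) (h : w ∉ p.support) :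
    p.toSubgraph.neighborSet w = ∅ := by
  ext x
  simp only [SimpleGraph.Subgraph.mem_neighborSet, Set.mem_empty_iff_false, iff_false]
  intro hadj
  exact h (p.mem_verts_toSubgraph.mp (p.toSubgraph.edge_vert hadj))

lemma path_start_nbhd {a b : V} (p : G.Walk a b) (hp : p.IsPath) (hab : a ≠ b) :
    ∃ y, s(a, y) ∈ p.edges ∧ p.toSubgraph.neighborSet a = {y} := by
  cases p with
  | nil => exact absurd rfl hab
  | cons h' q =>
    rename_i c
    refine ⟨c, by simp [Walk.edges_cons], ?_⟩
    have hnotin : a ∉ q.support := by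
      have := hp.support_nodup
      rw [Walk.support_cons] at this
      exact (List.nodup_cons.mp this).1
    show ((G.subgraphOfAdj h') ⊔ q.toSubgraph).neighborSet a = {c}
    rw [SimpleGraph.Subgraph.neighborSet_sup, nbhd_empty_of_not_mem_support q hnotin,
      Set.union_empty, SimpleGraph.neighborSet_fst_subgraphOfAdj]

lemma cycle_start_nbhd {v : V} (c : G.Walk v v) (hc : c.IsCycle) :
    (c.toSubgraph.neighborSet v).ncard = 2 := by
  cases c with
  | nil => exact absurd hc Walk.IsCycle.not_of_nil
  | cons h q =>
    rename_i x
    rw [Walk.cons_isCycle_iff] at hc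
    obtain ⟨hq, he⟩ := hc
    have hvx : v ≠ x := G.ne_of_adj h
    obtain ⟨y, hymem, hynb⟩ := path_start_nbhd q.reverse hq.reverse hvx
    have hxy : x ≠ y := by
      intro hxy
      apply he
      have : s(v, y) ∈ q.edges := by
        rw [Walk.edges_reverse] at hymem
        exact List.mem_reverse.mp hymem
      rw [show s(v, x) = s(v, y) from by rw [hxy]]
      exact this
    have : (Walk.cons h q).toSubgraph.neighborSet v = {x, y} := by
      show ((G.subgraphOfAdj h) ⊔ q.toSubgraph).neighborSet v = {x, y}
      have hynb' : q.toSubgraph.neighborSet v = {y} := by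
        have h2 := hynb
        rw [Walk.toSubgraph_reverse] at h2
        exact h2
      rw [SimpleGraph.Subgraph.neighborSet_sup, SimpleGraph.neighborSet_fst_subgraphOfAdj, hynb']
      rw [Set.singleton_union]
    rw [this]
    exact Set.ncard_pair hxy

lemma toSubgraph_isCycleSubgraph {u : V} {c : G.Walk u u} (hc : c.IsCycle) :
    c.toSubgraph.IsCycleSubgraph := by
  classical
  refine ⟨c.toSubgraph_connected, ?_⟩
  intro v hv
  have hv' : v ∈ c.support := (c.mem_verts_toSubgraph).mp hv
  have hrot := Walk.toSubgraph_rotate c hv'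
  rw [← hrot]
  exact cycle_start_nbhd _ (hc.rotate hv')

lemma connected_sdiff_of_cycle_edge (hconn : G.Connected) {u : V} {c : G.Walk u u}
    (hc : c.IsCycle) {e0 : Sym2 V} (he0 : e0 ∈ c.edges) :
    (G \ SimpleGraph.fromEdgeSet {e0}).Connected := by
  induction e0 with
  | _ v w =>
    have hreach : (G \ SimpleGraph.fromEdgeSet {s(v, w)}).Reachable v w :=
      (SimpleGraph.adj_and_reachable_delete_edges_iff_exists_cycle.mpr ⟨u, c, hc, he0⟩).2
    rw [SimpleGraph.connected_iff]
    refine ⟨?_, hconn.nonempty⟩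
    intro a b
    obtain ⟨p⟩ := hconn.preconnected a b
    induction p with
    | nil => exact Reachable.refl _
    | @cons a' x' b' h q ih =>
      refine Reachable.trans ?_ ih
      by_cases heq : s(a', x') = s(v, w)
      · rw [Sym2.eq_iff] at heq
        rcases heq with ⟨rfl, rfl⟩ | ⟨rfl, rfl⟩
        · exact hreach
        · exact hreach.symm
      · refine SimpleGraph.Adj.reachable ?_
        simp only [SimpleGraph.sdiff_adj, SimpleGraph.fromEdgeSet_adj]
        exact ⟨h, fun hcon => heq hcon.1⟩

lemma coreD (hconn : G.Connected) (hm : Fintype.card V + 1 ≤ G.edgeSet.ncard) :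
    ∃ H1 H2 : G.Subgraph, H1.IsCycleSubgraph ∧ H2.IsCycleSubgraph ∧ H1 ≠ H2 := by
  classical
  haveI : Nonempty V := hconn.nonempty
  have hedgecard : ∀ (G₀ : SimpleGraph V) (inst : Fintype G₀.edgeSet),
      (@SimpleGraph.edgeFinset _ G₀ inst).card = G₀.edgeSet.ncard := by
    intro G₀ inst
    rw [Set.ncard_eq_toFinset_card']
    exact SimpleGraph.edgeFinset_card.trans (Set.toFinset_card _).symm
  have hacyclic : ¬ G.IsAcyclic := by
    intro hA
    have ht : G.IsTree := ⟨hconn, hA⟩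
    have hcard := ht.card_edgeFinset
    rw [hedgecard G _] at hcard
    omega
  unfold SimpleGraph.IsAcyclic at hacyclic
  push_neg at hacyclic
  obtain ⟨u, c1, hc1⟩ := hacyclic
  have hlen : c1.edges ≠ [] := by
    have h3 := hc1.three_le_length
    intro hnil
    have : c1.edges.length = c1.length := c1.length_edges
    rw [hnil] at this
    simp at this
    omega
  obtain ⟨e0, he0⟩ := List.exists_mem_of_ne_nil c1.edges hlen
  have he0G : e0 ∈ G.edgeSet := c1.edges_subset_edgeSet he0
  have hG'edge : (G \ SimpleGraph.fromEdgeSet {e0}).edgeSet = G.edgeSet \ {e0} := by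
    rw [SimpleGraph.edgeSet_sdiff, SimpleGraph.edgeSet_fromEdgeSet,
      SimpleGraph.edgeSet_sdiff_sdiff_isDiag]
  have hG'conn : (G \ SimpleGraph.fromEdgeSet {e0}).Connected :=
    connected_sdiff_of_cycle_edge hconn hc1 he0
  have hG'card : (G \ SimpleGraph.fromEdgeSet {e0}).edgeSet.ncard = G.edgeSet.ncard - 1 := by
    rw [hG'edge]
    rw [Set.ncard_diff_singleton_of_mem he0G]
  have hacyclic' : ¬ (G \ SimpleGraph.fromEdgeSet {e0}).IsAcyclic := by
    intro hA
    have ht : (G \ SimpleGraph.fromEdgeSet {e0}).IsTree := ⟨hG'conn, hA⟩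
    have hcard := ht.card_edgeFinset
    rw [hedgecard _ _] at hcard
    omega
  unfold SimpleGraph.IsAcyclic at hacyclic'
  push_neg at hacyclic'
  obtain ⟨u', c2', hc2'⟩ := hacyclic'
  have hsub : ∀ e ∈ c2'.edges, e ∈ G.edgeSet := by
    intro e he
    have := c2'.edges_subset_edgeSet he
    rw [hG'edge] at this
    exact this.1
  set c2 := c2'.transfer G hsub with hc2def
  have hc2 : c2.IsCycle := hc2'.transfer _
  have he0c2 : e0 ∉ c2.edges := by
    rw [hc2def, Walk.edges_transfer]
    intro hmem
    have := c2'.edges_subset_edgeSet hmem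
    rw [hG'edge] at this
    exact this.2 rfl
  refine ⟨c1.toSubgraph, c2.toSubgraph, toSubgraph_isCycleSubgraph hc1,
    toSubgraph_isCycleSubgraph hc2, ?_⟩
  intro heq
  have h1 : e0 ∈ c1.toSubgraph.edgeSet := (c1.mem_edges_toSubgraph).mpr he0
  rw [heq] at h1
  exact he0c2 ((c2.mem_edges_toSubgraph).mp h1)

section Subdiv

lemma subdiv_adj_inl_inr {v : V} {e : ↥G.edgeSet} :
    (subdivision G).Adj (Sum.inl v) (Sum.inr e) ↔ v ∈ (e : Sym2 V) := Iff.rfl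

lemma subdiv_not_adj_inl_inl {v w : V} : ¬ (subdivision G).Adj (Sum.inl v) (Sum.inl w) :=
  fun h => h

lemma subdiv_not_adj_inr_inr {e f : ↥G.edgeSet} :
    ¬ (subdivision G).Adj (Sum.inr e) (Sum.inr f) := fun h => h

lemma ncard_split (I : Set (V ⊕ ↥G.edgeSet)) :
    I.ncard = (Sum.inl ⁻¹' I).ncard + (Sum.inr ⁻¹' I).ncard := by
  classical
  have hdecomp : I = Sum.inl '' (Sum.inl ⁻¹' I) ∪ Sum.inr '' (Sum.inr ⁻¹' I) := by
    ext x
    cases x <;> simp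
  conv_lhs => rw [hdecomp]
  rw [Set.ncard_union_eq ?_ ?_ ?_]
  · rw [Set.ncard_image_of_injective _ Sum.inl_injective,
      Set.ncard_image_of_injective _ Sum.inr_injective]
  · rw [Set.disjoint_left]
    rintro _ ⟨a, -, rfl⟩ ⟨b, -, hb⟩
    exact Sum.inl_ne_inr hb.symm
  · exact Set.toFinite _
  · exact Set.toFinite _

lemma ncard_range_inl : (Set.range (Sum.inl : V → V ⊕ ↥G.edgeSet)).ncard = Fintype.card V := by
  rw [← Set.image_univ, Set.ncard_image_of_injective _ Sum.inl_injective, Set.ncard_univ,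
    Nat.card_eq_fintype_card]

lemma ncard_range_inr :
    (Set.range (Sum.inr : ↥G.edgeSet → V ⊕ ↥G.edgeSet)).ncard = G.edgeSet.ncard := by
  rw [← Set.image_univ, Set.ncard_image_of_injective _ Sum.inr_injective, Set.ncard_univ,
    Nat.card_coe_set_eq]

lemma indep_le (hconn : G.Connected) (hm : G.edgeSet.ncard ≤ Fintype.card V)
    {I : Set (V ⊕ ↥G.edgeSet)} (hI : ∀ a ∈ I, ∀ b ∈ I, ¬ (subdivision G).Adj a b) :
    I.ncard ≤ Fintype.card V := by
  classical
  set A : Set V := Sum.inl ⁻¹' I with hA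
  set B : Set ↥G.edgeSet := Sum.inr ⁻¹' I with hB
  have hsplit := ncard_split I
  rw [← hA, ← hB] at hsplit
  have hsub : (↑) '' B ⊆ {e | e ∈ G.edgeSet ∧ ∀ v ∈ e, v ∈ Aᶜ} := by
    rintro _ ⟨e, heB, rfl⟩
    refine ⟨e.2, ?_⟩
    intro v hv hvA
    exact hI _ hvA _ heB (subdiv_adj_inl_inr.mpr hv)
  have hBle : B.ncard ≤ Aᶜ.ncard := by
    calc B.ncard = ((↑) '' B).ncard :=
          (Set.ncard_image_of_injective _ Subtype.coe_injective).symm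
      _ ≤ {e | e ∈ G.edgeSet ∧ ∀ v ∈ e, v ∈ Aᶜ}.ncard :=
          Set.ncard_le_ncard hsub (Set.toFinite _)
      _ ≤ Aᶜ.ncard := coreB hconn hm Aᶜ
  have hcompl : A.ncard + Aᶜ.ncard = Fintype.card V := by
    have := Set.ncard_add_ncard_compl A
    simpa [Nat.card_eq_fintype_card] using this
  omega

lemma total_card (C : Set (V ⊕ ↥G.edgeSet)) :
    C.ncard + Cᶜ.ncard = Fintype.card V + G.edgeSet.ncard := by
  classical
  have := Set.ncard_add_ncard_compl C
  rw [this]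
  rw [Nat.card_sum, Nat.card_eq_fintype_card, Nat.card_coe_set_eq]

end Subdiv


end Aux

/-- For a finite connected simple graph `G` of order `n ≥ 2` and size `m`,
the following are equivalent: (i) `G` contains at most one cycle;
(ii) `α(S(G)) = |V| = n`; (iii) `τ(S(G)) = |S| = m`. -/
theorem atMostOneCycle_tfae {V : Type*} [Fintype V] (G : SimpleGraph V)
    (hconn : G.Connected) (hn : 2 ≤ Fintype.card V) :
    List.TFAE
      [ {H : G.Subgraph | H.IsCycleSubgraph}.Subsingleton,
        IsGreatest {k : ℕ | ∃ I : Set (V ⊕ G.edgeSet),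
            (∀ a ∈ I, ∀ b ∈ I, ¬ (subdivision G).Adj a b) ∧ I.ncard = k}
          (Fintype.card V),
        IsLeast {k : ℕ | ∃ C : Set (V ⊕ G.edgeSet),
            (∀ a b, (subdivision G).Adj a b → a ∈ C ∨ b ∈ C) ∧ C.ncard = k}
          G.edgeSet.ncard ] := by
  classical
  have hVindep : ∀ a ∈ Set.range (Sum.inl : V → V ⊕ ↥G.edgeSet),
      ∀ b ∈ Set.range (Sum.inl : V → V ⊕ ↥G.edgeSet), ¬ (subdivision G).Adj a b := by
    rintro _ ⟨v, rfl⟩ _ ⟨w, rfl⟩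
    exact subdiv_not_adj_inl_inl
  have hScover : ∀ a b, (subdivision G).Adj a b →
      a ∈ Set.range (Sum.inr : ↥G.edgeSet → V ⊕ ↥G.edgeSet) ∨
      b ∈ Set.range (Sum.inr : ↥G.edgeSet → V ⊕ ↥G.edgeSet) := by
    rintro (v | e) (w | f) h
    · exact absurd h subdiv_not_adj_inl_inl
    · exact Or.inr ⟨f, rfl⟩
    · exact Or.inl ⟨e, rfl⟩
    · exact absurd h subdiv_not_adj_inr_inr
  have hSindep : ∀ a ∈ Set.range (Sum.inr : ↥G.edgeSet → V ⊕ ↥G.edgeSet),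
      ∀ b ∈ Set.range (Sum.inr : ↥G.edgeSet → V ⊕ ↥G.edgeSet),
      ¬ (subdivision G).Adj a b := by
    rintro _ ⟨e, rfl⟩ _ ⟨f, rfl⟩
    exact subdiv_not_adj_inr_inr
  have hVcover : ∀ a b, (subdivision G).Adj a b →
      a ∈ Set.range (Sum.inl : V → V ⊕ ↥G.edgeSet) ∨
      b ∈ Set.range (Sum.inl : V → V ⊕ ↥G.edgeSet) := by
    rintro (v | e) (w | f) h
    · exact Or.inl ⟨v, rfl⟩
    · exact Or.inl ⟨v, rfl⟩
    · exact Or.inr ⟨w, rfl⟩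
    · exact absurd h subdiv_not_adj_inr_inr
  tfae_have 1 → 2 := by
    intro hsub
    have hm : G.edgeSet.ncard ≤ Fintype.card V := by
      by_contra hcon
      push_neg at hcon
      obtain ⟨H1, H2, h1, h2, hne⟩ := coreD hconn hcon
      exact hne (hsub h1 h2)
    constructor
    · exact ⟨Set.range Sum.inl, hVindep, ncard_range_inl⟩
    · rintro k ⟨I, hI, rfl⟩
      exact indep_le hconn hm hI
  tfae_have 2 → 3 := by
    intro h2
    have hm : G.edgeSet.ncard ≤ Fintype.card V :=
      h2.2 ⟨Set.range Sum.inr, hSindep, ncard_range_inr⟩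
    constructor
    · exact ⟨Set.range Sum.inr, hScover, ncard_range_inr⟩
    · rintro k ⟨C, hC, rfl⟩
      have hindep : ∀ a ∈ Cᶜ, ∀ b ∈ Cᶜ, ¬ (subdivision G).Adj a b :=
        fun a ha b hb hadj => (hC a b hadj).elim ha hb
      have hle := indep_le hconn hm hindep
      have htot := total_card C
      omega
  tfae_have 3 → 1 := by
    intro h3
    have hm : G.edgeSet.ncard ≤ Fintype.card V :=
      h3.2 ⟨Set.range Sum.inl, hVcover, ncard_range_inl⟩
    intro H1 hH1 H2 hH2
    by_contra hne
    have := coreA hconn hH1 hH2 hne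
    omega
  tfae_finish
end

section
/- Let G be a finite connected simple graph of order n ≥ 2 and size m, with subdivision graph S(G), and let V denote the set of vertices of S(G) coming from V(G) and S the set of vertices of S(G) coming from E(G). The following statements are equivalent: (i) G contains at most one cycle; (ii) β(S(G)) = |S| = m; (iii) ρ(S(G)) = |V| = n. -/
open SimpleGraph Set Function

namespace AtMostOneAux

variable {V : Type*} [Fintype V] {G : SimpleGraph V}

lemma subdiv_edge_decomp {x : Sym2 (V ⊕ G.edgeSet)} (hx : x ∈ (subdivision G).edgeSet) :
    ∃ (v : V) (e : G.edgeSet), v ∈ (e : Sym2 V) ∧ x = s(Sum.inl v, Sum.inr e) := by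
  induction x with
  | _ a b =>
    rcases a with v | e <;> rcases b with w | f
    · exact absurd hx (by simp [subdivision, mem_edgeSet])
    · exact ⟨v, f, hx, rfl⟩
    · exact ⟨w, e, hx, Sym2.eq_swap⟩
    · exact absurd hx (by simp [subdivision, mem_edgeSet])

lemma subdiv_mem_edgeSet (v : V) (e : G.edgeSet) (h : v ∈ (e : Sym2 V)) :
    s(Sum.inl v, Sum.inr e) ∈ (subdivision G).edgeSet := h

/-- an injective choice of endpoints for all edges -/
def GoodFun (G : SimpleGraph V) : Prop :=
  ∃ f : G.edgeSet → V, Function.Injective f ∧ ∀ e : G.edgeSet, f e ∈ (e : Sym2 V)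

/-! ### Upper bound for matchings -/

lemma matching_card_le {M : Set (Sym2 (V ⊕ G.edgeSet))}
    (hsub : M ⊆ (subdivision G).edgeSet)
    (hdisj : ∀ e ∈ M, ∀ f ∈ M, e ≠ f → ∀ x, ¬ (x ∈ e ∧ x ∈ f)) :
    M.ncard ≤ G.edgeSet.ncard := by
  classical
  choose vF eF hmemF hdecF using fun (x : M) => subdiv_edge_decomp (hsub x.2)
  have hinj : Function.Injective eF := by
    intro x y hxy
    by_contra hne
    have hne' : (x : Sym2 (V ⊕ G.edgeSet)) ≠ y := fun h => hne (Subtype.ext h)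
    refine hdisj x x.2 y y.2 hne' (Sum.inr (eF x)) ⟨?_, ?_⟩
    · rw [hdecF x]; exact Sym2.mem_mk_right _ _
    · rw [hdecF y, hxy]; exact Sym2.mem_mk_right _ _
  calc M.ncard = Nat.card M := (Nat.card_coe_set_eq M).symm
    _ ≤ Nat.card G.edgeSet := Nat.card_le_card_of_injective eF hinj
    _ = G.edgeSet.ncard := Nat.card_coe_set_eq _

/-- a maximum matching gives a good function -/
lemma goodFun_of_matching {M : Set (Sym2 (V ⊕ G.edgeSet))}
    (hsub : M ⊆ (subdivision G).edgeSet)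
    (hdisj : ∀ e ∈ M, ∀ f ∈ M, e ≠ f → ∀ x, ¬ (x ∈ e ∧ x ∈ f))
    (hcard : M.ncard = G.edgeSet.ncard) : GoodFun G := by
  classical
  choose vF eF hmemF hdecF using fun (x : M) => subdiv_edge_decomp (hsub x.2)
  have hinj : Function.Injective eF := by
    intro x y hxy
    by_contra hne
    have hne' : (x : Sym2 (V ⊕ G.edgeSet)) ≠ y := fun h => hne (Subtype.ext h)
    refine hdisj x x.2 y y.2 hne' (Sum.inr (eF x)) ⟨?_, ?_⟩
    · rw [hdecF x]; exact Sym2.mem_mk_right _ _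
    · rw [hdecF y, hxy]; exact Sym2.mem_mk_right _ _
  have : Fintype M := Fintype.ofFinite _
  have : Fintype G.edgeSet := Fintype.ofFinite _
  have hbij : Function.Bijective eF := by
    rw [Fintype.bijective_iff_injective_and_card]
    refine ⟨hinj, ?_⟩
    rw [← Nat.card_coe_set_eq, ← Nat.card_coe_set_eq] at hcard
    simpa [Nat.card_eq_fintype_card] using hcard
  choose P hP using hbij.2
  refine ⟨fun e => vF (P e), ?_, ?_⟩
  · intro e e' hee
    have hee' : vF (P e) = vF (P e') := hee
    by_contra hne
    have hxy : P e ≠ P e' := fun h => hne (by rw [← hP e, ← hP e', h])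
    have hxy' : ((P e : Sym2 (V ⊕ G.edgeSet))) ≠ (P e' : Sym2 (V ⊕ G.edgeSet)) :=
      fun h => hxy (Subtype.ext h)
    refine hdisj _ (P e).2 _ (P e').2 hxy' (Sum.inl (vF (P e))) ⟨?_, ?_⟩
    · rw [hdecF (P e)]; exact Sym2.mem_mk_left _ _
    · rw [hdecF (P e'), ← hee']; exact Sym2.mem_mk_left _ _
  · intro e
    have := hmemF (P e)
    rw [hP e] at this
    exact this

/-- a good function gives a matching of size `m` -/
lemma matching_of_goodFun (f : G.edgeSet → V) (hinj : Function.Injective f)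
    (hmem : ∀ e : G.edgeSet, f e ∈ (e : Sym2 V)) :
    ∃ M : Set (Sym2 (V ⊕ G.edgeSet)),
      M ⊆ (subdivision G).edgeSet ∧
      (∀ e ∈ M, ∀ f ∈ M, e ≠ f → ∀ x, ¬ (x ∈ e ∧ x ∈ f)) ∧
      M.ncard = G.edgeSet.ncard := by
  classical
  set φ : G.edgeSet → Sym2 (V ⊕ G.edgeSet) := fun e => s(Sum.inl (f e), Sum.inr e) with hφ
  have hφinj : Function.Injective φ := by
    intro e e' h
    simp only [φ, Sym2.eq_iff] at h
    rcases h with ⟨-, h2⟩ | ⟨h1, -⟩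
    · exact Sum.inr_injective h2
    · simp at h1
  refine ⟨Set.range φ, ?_, ?_, ?_⟩
  · rintro x ⟨e, rfl⟩
    exact subdiv_mem_edgeSet (f e) e (hmem e)
  · rintro x ⟨e, rfl⟩ y ⟨e', rfl⟩ hne z ⟨hz1, hz2⟩
    have hee : e ≠ e' := fun h => hne (by rw [h])
    rw [Sym2.mem_iff] at hz1 hz2
    rcases hz1 with rfl | rfl <;> rcases hz2 with h | h
    · exact hee (hinj (Sum.inl_injective h))
    · simp at h
    · simp at h
    · exact hee (Sum.inr_injective h)
  · rw [← Set.image_univ, Set.ncard_image_of_injective _ hφinj, Set.ncard_univ,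
      Nat.card_coe_set_eq]

/-! ### Lower bound for covers -/

lemma cover_card_ge {A : Set (Sym2 (V ⊕ G.edgeSet))}
    (hsub : A ⊆ (subdivision G).edgeSet)
    (hcov : ∀ x : V ⊕ G.edgeSet, ∃ e ∈ A, x ∈ e) :
    Fintype.card V ≤ A.ncard := by
  classical
  choose κ hκA hκmem using fun v : V => hcov (Sum.inl v)
  have hinj : Function.Injective (fun v => (⟨κ v, hκA v⟩ : A)) := by
    intro v v' h
    simp only [Subtype.mk.injEq] at h
    obtain ⟨w, e, hwe, hdec⟩ := subdiv_edge_decomp (hsub (hκA v))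
    have h1 : (Sum.inl v : V ⊕ G.edgeSet) = Sum.inl w := by
      have := hκmem v
      rw [hdec, Sym2.mem_iff] at this
      rcases this with h' | h'
      · exact h'
      · simp at h'
    have h2 : (Sum.inl v' : V ⊕ G.edgeSet) = Sum.inl w := by
      have := hκmem v'
      rw [← h, hdec, Sym2.mem_iff] at this
      rcases this with h' | h'
      · exact h'
      · simp at h'
    exact Sum.inl_injective (h1.trans h2.symm)
  calc Fintype.card V = Nat.card V := (Nat.card_eq_fintype_card).symm
    _ ≤ Nat.card A := Nat.card_le_card_of_injective _ hinj
    _ = A.ncard := Nat.card_coe_set_eq _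


lemma exists_incident (hconn : G.Connected) (hn : 2 ≤ Fintype.card V) (v : V) :
    ∃ e : G.edgeSet, v ∈ (e : Sym2 V) := by
  obtain ⟨w, hw⟩ := Fintype.exists_ne_of_one_lt_card (by omega) v
  obtain ⟨p⟩ := hconn v w
  cases p with
  | nil => exact absurd rfl hw.symm
  | cons h q => exact ⟨⟨_, h⟩, Sym2.mem_mk_left _ _⟩

lemma cover_of_goodFun (hconn : G.Connected) (hn : 2 ≤ Fintype.card V)
    (f : G.edgeSet → V) (hinj : Function.Injective f)
    (hmem : ∀ e : G.edgeSet, f e ∈ (e : Sym2 V)) :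
    ∃ A : Set (Sym2 (V ⊕ G.edgeSet)),
      A ⊆ (subdivision G).edgeSet ∧
      (∀ x : V ⊕ G.edgeSet, ∃ e ∈ A, x ∈ e) ∧
      A.ncard = Fintype.card V := by
  classical
  set g : V → G.edgeSet := fun v =>
    if h : ∃ e, f e = v then h.choose else (exists_incident hconn hn v).choose with hg
  have hgmem : ∀ v, v ∈ (g v : Sym2 V) := by
    intro v
    rw [hg]
    by_cases h : ∃ e, f e = v
    · simp only [dif_pos h]
      have h3 := hmem h.choose
      rwa [h.choose_spec] at h3
    · simp only [dif_neg h]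
      exact (exists_incident hconn hn v).choose_spec
  have hgsurj : ∀ e : G.edgeSet, ∃ v, g v = e := by
    intro e
    refine ⟨f e, ?_⟩
    have h : ∃ e', f e' = f e := ⟨e, rfl⟩
    rw [hg]
    simp only [dif_pos h]
    exact hinj h.choose_spec
  set ψ : V → Sym2 (V ⊕ G.edgeSet) := fun v => s(Sum.inl v, Sum.inr (g v)) with hψ
  have hψinj : Function.Injective ψ := by
    intro v v' h
    simp only [ψ, Sym2.eq_iff] at h
    rcases h with ⟨h1, -⟩ | ⟨h1, -⟩
    · exact Sum.inl_injective h1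
    · simp at h1
  refine ⟨Set.range ψ, ?_, ?_, ?_⟩
  · rintro x ⟨v, rfl⟩
    exact hgmem v
  · rintro (v | e)
    · exact ⟨ψ v, ⟨v, rfl⟩, Sym2.mem_mk_left _ _⟩
    · obtain ⟨v, hv⟩ := hgsurj e
      exact ⟨ψ v, ⟨v, rfl⟩, by rw [hψ]; simp only [hv]; exact Sym2.mem_mk_right _ _⟩
  · rw [← Set.image_univ, Set.ncard_image_of_injective _ hψinj, Set.ncard_univ,
      Nat.card_eq_fintype_card]

lemma goodFun_of_cover {A : Set (Sym2 (V ⊕ G.edgeSet))}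
    (hsub : A ⊆ (subdivision G).edgeSet)
    (hcov : ∀ x : V ⊕ G.edgeSet, ∃ e ∈ A, x ∈ e)
    (hcard : A.ncard = Fintype.card V) :
    ∃ f : G.edgeSet → V, Function.Injective f ∧ ∀ e : G.edgeSet, f e ∈ (e : Sym2 V) := by
  classical
  choose vA eA hmemA hdecA using fun (a : A) => subdiv_edge_decomp (hsub a.2)
  choose κ hκA hκmem using fun v : V => hcov (Sum.inl v)
  set κ' : V → A := fun v => ⟨κ v, hκA v⟩ with hκ'
  -- vA is a left inverse of κ'
  have hleft : ∀ v, vA (κ' v) = v := by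
    intro v
    have h1 : (Sum.inl v : V ⊕ G.edgeSet) ∈ (κ' v : Sym2 (V ⊕ G.edgeSet)) := hκmem v
    rw [hdecA (κ' v), Sym2.mem_iff] at h1
    rcases h1 with h1 | h1
    · exact (Sum.inl_injective h1).symm
    · simp at h1
  have hκ'inj : Function.Injective κ' := Function.LeftInverse.injective hleft
  have : Fintype A := Fintype.ofFinite _
  have hbij : Function.Bijective κ' := by
    rw [Fintype.bijective_iff_injective_and_card]
    refine ⟨hκ'inj, ?_⟩
    have : Nat.card A = Fintype.card V := by rw [Nat.card_coe_set_eq]; exact hcard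
    simpa [Nat.card_eq_fintype_card] using this.symm
  -- hence each element of A is κ' of its inl-vertex
  have hfix : ∀ a : A, κ' (vA a) = a := by
    intro a
    obtain ⟨v, rfl⟩ := hbij.2 a
    rw [hleft v]
  -- the choice function
  choose α hαA hαmem using fun e : G.edgeSet => hcov (Sum.inr e)
  set β : G.edgeSet → A := fun e => ⟨α e, hαA e⟩ with hβ
  have heA : ∀ e, eA (β e) = e := by
    intro e
    have h1 : (Sum.inr e : V ⊕ G.edgeSet) ∈ (β e : Sym2 (V ⊕ G.edgeSet)) := hαmem e
    rw [hdecA (β e), Sym2.mem_iff] at h1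
    rcases h1 with h1 | h1
    · simp at h1
    · exact (Sum.inr_injective h1).symm
  refine ⟨fun e => vA (β e), ?_, ?_⟩
  · intro e e' hee
    have hee' : vA (β e) = vA (β e') := hee
    have h1 : κ' (vA (β e)) = β e := hfix (β e)
    have h2 : κ' (vA (β e')) = β e' := hfix (β e')
    have : β e = β e' := by rw [← h1, ← h2, hee']
    have := congrArg eA this
    rwa [heA, heA] at this
  · intro e
    have := hmemA (β e)
    rwa [heA e] at this

lemma mem_verts_of_mem_edge {C : G.Subgraph} {e : Sym2 V} (he : e ∈ C.edgeSet) :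
    ∀ v ∈ e, v ∈ C.verts := by
  induction e with
  | _ a b =>
    rw [Subgraph.mem_edgeSet] at he
    intro v hv
    rw [Sym2.mem_iff] at hv
    rcases hv with rfl | rfl
    · exact C.edge_vert he
    · exact C.edge_vert he.symm

lemma cycle_card_eq {C : G.Subgraph}
    (hreg : ∀ v ∈ C.verts, (C.neighborSet v).ncard = 2) :
    C.edgeSet.ncard = C.verts.ncard := by
  classical
  set W : Finset V := C.verts.toFinite.toFinset with hW
  set E : Finset (Sym2 V) := C.edgeSet.toFinite.toFinset with hE
  set D : Finset (V × Sym2 V) := (W ×ˢ E).filter (fun p => p.1 ∈ p.2) with hD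
  have hmemW : ∀ {v}, v ∈ W ↔ v ∈ C.verts := by intro v; rw [hW, Set.Finite.mem_toFinset]
  have hmemE : ∀ {e}, e ∈ E ↔ e ∈ C.edgeSet := by intro e; rw [hE, Set.Finite.mem_toFinset]
  have h1 : D.card = ∑ v ∈ W, (D.filter fun p => p.1 = v).card := by
    refine Finset.card_eq_sum_card_fiberwise ?_
    intro p hp
    rw [Finset.mem_coe, hD, Finset.mem_filter, Finset.mem_product] at hp
    exact Finset.mem_coe.mpr hp.1.1
  have h2 : D.card = ∑ e ∈ E, (D.filter fun p => p.2 = e).card := by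
    refine Finset.card_eq_sum_card_fiberwise ?_
    intro p hp
    rw [Finset.mem_coe, hD, Finset.mem_filter, Finset.mem_product] at hp
    exact Finset.mem_coe.mpr hp.1.2
  have hv2 : ∀ v ∈ W, (D.filter fun p => p.1 = v).card = 2 := by
    intro v hv
    have himg : (D.filter fun p => p.1 = v) =
        (C.neighborSet v).toFinite.toFinset.image (fun w => (v, s(v, w))) := by
      ext ⟨a, e⟩
      simp only [hD, Finset.mem_filter, Finset.mem_product, Finset.mem_image,
        Set.Finite.mem_toFinset, Prod.mk.injEq]
      constructor
      · rintro ⟨⟨⟨ha, he⟩, hae⟩, rfl⟩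
        obtain ⟨w, rfl⟩ := Sym2.mem_iff_exists.mp hae
        exact ⟨w, Subgraph.mem_edgeSet.mp (hmemE.mp he), rfl, rfl⟩
      · rintro ⟨w, hw, rfl, rfl⟩
        exact ⟨⟨⟨hv, hmemE.mpr (Subgraph.mem_edgeSet.mpr hw)⟩, Sym2.mem_mk_left _ _⟩, rfl⟩
    rw [himg, Finset.card_image_of_injective _ (fun w w' h => by
      simpa using Sym2.congr_right.mp (congrArg Prod.snd h)),
      ← Set.ncard_eq_toFinset_card _ _]
    exact hreg v (hmemW.mp hv)
  have he2 : ∀ e ∈ E, (D.filter fun p => p.2 = e).card = 2 := by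
    intro e he
    induction e with
    | _ a b =>
      have hadj : C.Adj a b := Subgraph.mem_edgeSet.mp (hmemE.mp he)
      have hset : (D.filter fun p => p.2 = s(a, b)) = {(a, s(a, b)), (b, s(a, b))} := by
        ext ⟨x, e'⟩
        simp only [hD, Finset.mem_filter, Finset.mem_product, Finset.mem_insert,
          Finset.mem_singleton, Prod.mk.injEq]
        constructor
        · rintro ⟨⟨⟨hx, he'⟩, hxe⟩, rfl⟩
          rw [Sym2.mem_iff] at hxe
          rcases hxe with rfl | rfl
          · exact Or.inl ⟨rfl, rfl⟩
          · exact Or.inr ⟨rfl, rfl⟩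
        · rintro (⟨rfl, rfl⟩ | ⟨rfl, rfl⟩)
          · exact ⟨⟨⟨hmemW.mpr (C.edge_vert hadj), he⟩, Sym2.mem_mk_left _ _⟩, rfl⟩
          · exact ⟨⟨⟨hmemW.mpr (C.edge_vert hadj.symm), he⟩, Sym2.mem_mk_right _ _⟩, rfl⟩
      rw [hset, Finset.card_insert_of_notMem (by simp [hadj.ne]), Finset.card_singleton]
  have hfin1 : C.edgeSet.ncard = E.card := by rw [hE]; exact Set.ncard_eq_toFinset_card _ _
  have hfin2 : C.verts.ncard = W.card := by rw [hW]; exact Set.ncard_eq_toFinset_card _ _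
  rw [Finset.sum_congr rfl hv2, Finset.sum_const, smul_eq_mul] at h1
  rw [Finset.sum_congr rfl he2, Finset.sum_const, smul_eq_mul] at h2
  omega

lemma goodFun_surj_on_cycle {f : G.edgeSet → V} (hinj : Function.Injective f)
    (hmem : ∀ e : G.edgeSet, f e ∈ (e : Sym2 V))
    {C : G.Subgraph} (hC : C.IsCycleSubgraph) :
    ∀ v ∈ C.verts, ∃ e : G.edgeSet, ↑e ∈ C.edgeSet ∧ f e = v := by
  classical
  set EC : Set G.edgeSet := {e | ↑e ∈ C.edgeSet} with hEC
  have hmaps : ∀ e ∈ EC, f e ∈ C.verts := fun e he =>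
    mem_verts_of_mem_edge he _ (hmem e)
  have hcard : EC.ncard = C.edgeSet.ncard := by
    have h1 : (Subtype.val '' EC) = C.edgeSet := by
      rw [hEC]
      ext e
      simp only [Set.mem_image, Set.mem_setOf_eq]
      constructor
      · rintro ⟨e', he', rfl⟩; exact he'
      · intro he; exact ⟨⟨e, C.edgeSet_subset he⟩, he, rfl⟩
    rw [← h1, Set.ncard_image_of_injective _ Subtype.val_injective]
  have himg : f '' EC = C.verts := by
    refine Set.eq_of_subset_of_ncard_le ?_ ?_ (Set.toFinite _)
    · rintro v ⟨e, he, rfl⟩; exact hmaps e he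
    · rw [Set.ncard_image_of_injective _ hinj, hcard, cycle_card_eq hC.2]
  intro v hv
  rw [← himg] at hv
  obtain ⟨e, he, hfe⟩ := hv
  exact ⟨e, he, hfe⟩

lemma ncard_two_spec {α : Type*} {s : Set α} (h : s.ncard = 2) {x y : α}
    (hx : x ∈ s) (hy : y ∈ s) (hxy : x ≠ y) : s = {x, y} := by
  obtain ⟨a, b, hab, rfl⟩ := Set.ncard_eq_two.mp h
  simp only [Set.mem_insert_iff, Set.mem_singleton_iff] at hx hy
  rcases hx with rfl | rfl <;> rcases hy with rfl | rfl
  · exact absurd rfl hxy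
  · rfl
  · exact Set.pair_comm _ _
  · exact absurd rfl hxy

lemma three_not {α : Type*} {s : Set α} (h : s.ncard = 2) {x y z : α}
    (hx : x ∈ s) (hy : y ∈ s) (hz : z ∈ s)
    (hxy : x ≠ y) (hxz : x ≠ z) (hyz : y ≠ z) : False := by
  rw [ncard_two_spec h hx hy hxy] at hz
  rcases hz with rfl | rfl
  · exact hxz rfl
  · exact hyz rfl

lemma goodFun_preimage_mem {f : G.edgeSet → V} (hinj : Function.Injective f)
    (hmem : ∀ e : G.edgeSet, f e ∈ (e : Sym2 V))
    {C : G.Subgraph} (hC : C.IsCycleSubgraph) :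
    ∀ v ∈ C.verts, ∀ e : G.edgeSet, f e = v → ↑e ∈ C.edgeSet := by
  intro v hv e hfe
  obtain ⟨e', he', hfe'⟩ := goodFun_surj_on_cycle hinj hmem hC v hv
  rwa [hinj (hfe.trans hfe'.symm)]

lemma verts_subset_of_inter {f : G.edgeSet → V} (hinj : Function.Injective f)
    (hmem : ∀ e : G.edgeSet, f e ∈ (e : Sym2 V))
    {C₁ C₂ : G.Subgraph} (h₁ : C₁.IsCycleSubgraph) (h₂ : C₂.IsCycleSubgraph)
    (hne : (C₁.verts ∩ C₂.verts).Nonempty) : C₁.verts ⊆ C₂.verts := by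
  classical
  set S : Set V := C₁.verts ∩ C₂.verts with hS
  set ov : V → V := fun v =>
    if h : ∃ p : G.edgeSet × V, f p.1 = v ∧ (p.1 : Sym2 V) = s(v, p.2) then h.choose.2 else v
    with hov
  have hovC : ∀ {C : G.Subgraph}, C.IsCycleSubgraph → ∀ v ∈ C.verts,
      ∃ e : G.edgeSet, f e = v ∧ (e : Sym2 V) = s(v, ov v) ∧ ↑e ∈ C.edgeSet := by
    intro C hC v hv
    obtain ⟨e, heC, hfe⟩ := goodFun_surj_on_cycle hinj hmem hC v hv
    have hvmem : v ∈ (e : Sym2 V) := by rw [← hfe]; exact hmem e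
    obtain ⟨y, hy⟩ := Sym2.mem_iff_exists.mp hvmem
    have hex : ∃ p : G.edgeSet × V, f p.1 = v ∧ (p.1 : Sym2 V) = s(v, p.2) :=
      ⟨(e, y), hfe, hy⟩
    obtain ⟨hf1, hf2⟩ := hex.choose_spec
    have : hex.choose.1 = e := hinj (by rw [hf1, hfe])
    refine ⟨e, hfe, ?_, heC⟩
    rw [hov]
    simp only [dif_pos hex]
    rw [← this, hf2]
  have hO : ∀ v ∈ S, ov v ∈ S ∧ ov v ≠ v := by
    intro v hv
    obtain ⟨e, hfe, hedec, heC₁⟩ := hovC h₁ v hv.1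
    have heC₂ : ↑e ∈ C₂.edgeSet := goodFun_preimage_mem hinj hmem h₂ v hv.2 e hfe
    have hovmem : ov v ∈ (e : Sym2 V) := by rw [hedec]; exact Sym2.mem_mk_right _ _
    refine ⟨⟨mem_verts_of_mem_edge heC₁ _ hovmem, mem_verts_of_mem_edge heC₂ _ hovmem⟩, ?_⟩
    have : (e : Sym2 V) ∈ G.edgeSet := e.2
    rw [hedec, mem_edgeSet] at this
    exact this.ne'
  have hInj : Set.InjOn ov S := by
    intro v hv v' hv' hovv
    by_contra hvv
    obtain ⟨e, hfe, hedec, heC₁⟩ := hovC h₁ v hv.1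
    obtain ⟨e', hfe', hedec', heC₁'⟩ := hovC h₁ v' hv'.1
    set u := ov v with hu
    have hu' : ov v' = u := hovv.symm
    have huS : u ∈ S := (hO v hv).1
    obtain ⟨eu, hfeu, hedecu, heuC₁⟩ := hovC h₁ u huS.1
    have hadj1 : u ∈ C₁.neighborSet v := by
      rw [Subgraph.mem_neighborSet, ← Subgraph.mem_edgeSet, ← hedec]; exact heC₁
    have hadjv : v ∈ C₁.neighborSet u := by
      rw [Subgraph.mem_neighborSet, ← Subgraph.mem_edgeSet, Sym2.eq_swap, ← hedec]; exact heC₁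
    have hadjv' : v' ∈ C₁.neighborSet u := by
      rw [Subgraph.mem_neighborSet, ← Subgraph.mem_edgeSet, Sym2.eq_swap, ← hu', ← hedec']
      exact heC₁'
    have hadjou : ov u ∈ C₁.neighborSet u := by
      rw [Subgraph.mem_neighborSet, ← Subgraph.mem_edgeSet, ← hedecu]; exact heuC₁
    have hne1 : v ≠ ov u := by
      intro hvou
      have hcoe : (eu : Sym2 V) = (e : Sym2 V) := by
        rw [hedecu, hedec, ← hvou, Sym2.eq_swap]
      have heq : eu = e := Subtype.ext hcoe
      have : u = v := by rw [← hfeu, ← hfe, heq]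
      exact (hO v hv).2 this
    have hne2 : v' ≠ ov u := by
      intro hvou
      have hcoe : (eu : Sym2 V) = (e' : Sym2 V) := by
        rw [hedecu, hedec', hu', ← hvou, Sym2.eq_swap]
      have heq : eu = e' := Subtype.ext hcoe
      have : u = v' := by rw [← hfeu, ← hfe', heq]
      exact ((hO v' hv').2 (hu'.trans this)).elim
    exact three_not (h₁.2 u huS.1) hadjv hadjv' hadjou hvv hne1 hne2
  have himg : ov '' S = S := by
    refine Set.eq_of_subset_of_ncard_le ?_ ?_ (Set.toFinite _)
    · rintro x ⟨v, hv, rfl⟩; exact (hO v hv).1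
    · rw [Set.ncard_image_of_injOn hInj]
  have hclosure : ∀ v ∈ S, ∀ u, C₁.Adj v u → u ∈ S := by
    intro v hv u hadj
    obtain ⟨w, hw, hwv⟩ := himg.symm ▸ hv
    obtain ⟨ew, hfew, hewdec, hewC₁⟩ := hovC h₁ w hw.1
    obtain ⟨ev, hfev, hevdec, hevC₁⟩ := hovC h₁ v hv.1
    have hwS : w ∈ S := hw
    have hovvS : ov v ∈ S := (hO v hv).1
    have hnw : w ≠ ov v := by
      intro hweq
      have hcoe : (ev : Sym2 V) = (ew : Sym2 V) := by
        rw [hevdec, hewdec, hwv, ← hweq, Sym2.eq_swap]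
      have heq : ev = ew := Subtype.ext hcoe
      have : v = w := by rw [← hfev, ← hfew, heq]
      exact ((hO w hw).2 (by rw [hwv, this])).elim
    have hnbr1 : ov v ∈ C₁.neighborSet v := by
      rw [Subgraph.mem_neighborSet, ← Subgraph.mem_edgeSet, ← hevdec]; exact hevC₁
    have hnbr2 : w ∈ C₁.neighborSet v := by
      rw [Subgraph.mem_neighborSet, ← Subgraph.mem_edgeSet]
      have : (ew : Sym2 V) = s(v, w) := by rw [hewdec, hwv, Sym2.eq_swap]
      rw [← this]; exact hewC₁
    have hpair := ncard_two_spec (h₁.2 v hv.1) hnbr1 hnbr2 (fun h => hnw h.symm)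
    have hu : u ∈ C₁.neighborSet v := hadj
    rw [hpair] at hu
    rcases hu with rfl | rfl
    · exact hovvS
    · exact hwS
  -- closure along walks in C₁
  have hwalk : ∀ (x y : C₁.verts) (p : C₁.coe.Walk x y), ↑x ∈ S → ↑y ∈ S := by
    intro x y p
    induction p with
    | nil => exact id
    | cons h q ih =>
      intro hx
      exact ih (hclosure _ hx _ (by rwa [Subgraph.coe_adj] at h))
  intro u hu
  obtain ⟨v₀, hv₀⟩ := hne
  obtain ⟨p⟩ := h₁.1 ⟨v₀, hv₀.1⟩ ⟨u, hu⟩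
  exact (hwalk _ _ p hv₀).2

lemma cycles_eq_of_inter {f : G.edgeSet → V} (hinj : Function.Injective f)
    (hmem : ∀ e : G.edgeSet, f e ∈ (e : Sym2 V))
    {C₁ C₂ : G.Subgraph} (h₁ : C₁.IsCycleSubgraph) (h₂ : C₂.IsCycleSubgraph)
    (hne : (C₁.verts ∩ C₂.verts).Nonempty) : C₁ = C₂ := by
  have hv12 : C₁.verts = C₂.verts :=
    Set.Subset.antisymm (verts_subset_of_inter hinj hmem h₁ h₂ hne)
      (verts_subset_of_inter hinj hmem h₂ h₁ (by rwa [Set.inter_comm]))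
  have hE : ∀ {D₁ D₂ : G.Subgraph}, D₁.IsCycleSubgraph → D₂.IsCycleSubgraph →
      D₁.verts = D₂.verts → D₁.edgeSet ⊆ D₂.edgeSet := by
    intro D₁ D₂ g₁ g₂ hv e he
    have he' : e ∈ G.edgeSet := D₁.edgeSet_subset he
    have hfe : f ⟨e, he'⟩ ∈ e := hmem ⟨e, he'⟩
    have hvmem : f ⟨e, he'⟩ ∈ D₁.verts := mem_verts_of_mem_edge he _ hfe
    exact goodFun_preimage_mem hinj hmem g₂ _ (hv ▸ hvmem) ⟨e, he'⟩ rfl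
  have hEeq : C₁.edgeSet = C₂.edgeSet :=
    Set.Subset.antisymm (hE h₁ h₂ hv12) (hE h₂ h₁ hv12.symm)
  refine SimpleGraph.Subgraph.ext hv12 ?_
  funext x y
  exact propext (by rw [← Subgraph.mem_edgeSet, ← Subgraph.mem_edgeSet, hEeq])

lemma chain {f : G.edgeSet → V} (hinj : Function.Injective f)
    (hmem : ∀ e : G.edgeSet, f e ∈ (e : Sym2 V))
    {C₂ : G.Subgraph}
    (hin₂ : ∀ v ∈ C₂.verts, ∀ e : G.edgeSet, f e = v → ↑e ∈ C₂.edgeSet) :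
    ∀ {c b : V} (p : G.Walk c b), p.IsPath → ∀ (a : V) (h : G.Adj a c), a ∉ p.support →
      f ⟨s(a, c), h⟩ = c → a ∉ C₂.verts → b ∈ C₂.verts →
      (∀ x ∈ p.support, x ≠ b → x ∉ C₂.verts) → False := by
  intro c b p
  induction p with
  | nil =>
    intro _ a h _ hfe haW hb _
    exact haW (mem_verts_of_mem_edge (hin₂ _ hb ⟨_, h⟩ hfe) a (Sym2.mem_mk_left _ _))
  | @cons c d b h' q ih =>
    intro hp a h hsup hfe haW hb hall
    have hdsup : d ∈ (Walk.cons h' q).support := by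
      rw [Walk.support_cons]
      exact List.mem_cons_of_mem _ q.start_mem_support
    have hqpath : q.IsPath := hp.of_cons
    have hcq : c ∉ q.support := (Walk.cons_isPath_iff _ _).mp hp |>.2
    have hfe2 : f ⟨s(c, d), h'⟩ = d := by
      have hm := hmem ⟨s(c, d), h'⟩
      rw [Sym2.mem_iff] at hm
      rcases hm with hm | hm
      · exfalso
        have heq : (⟨s(a, c), h⟩ : G.edgeSet) = ⟨s(c, d), h'⟩ := hinj (by rw [hfe, hm])
        have : s(a, c) = s(c, d) := congrArg Subtype.val heq
        rw [Sym2.eq_iff] at this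
        rcases this with ⟨h1, -⟩ | ⟨h1, -⟩
        · rw [h1] at hsup
          exact hsup (Walk.start_mem_support _)
        · rw [h1] at hsup
          exact hsup hdsup
      · exact hm
    have hcb : c ≠ b := by
      intro hcb
      exact hcq (hcb ▸ q.end_mem_support)
    refine ih hqpath c h' hcq hfe2 ?_ hb ?_
    · exact hall c (Walk.start_mem_support _) hcb
    · intro x hx hxb
      exact hall x (by rw [Walk.support_cons]; exact List.mem_cons_of_mem _ hx) hxb
 
lemma not_disjoint_cycles (hconn : G.Connected) {f : G.edgeSet → V}
    (hinj : Function.Injective f) (hmem : ∀ e : G.edgeSet, f e ∈ (e : Sym2 V))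
    {C₁ C₂ : G.Subgraph} (h₁ : C₁.IsCycleSubgraph) (h₂ : C₂.IsCycleSubgraph)
    (hd : C₁.verts ∩ C₂.verts = ∅) : False := by
  classical
  have hdisj : ∀ x, x ∈ C₁.verts → x ∉ C₂.verts := by
    intro x h1 h2
    exact Set.eq_empty_iff_forall_notMem.mp hd x ⟨h1, h2⟩
  have hin₁ := goodFun_preimage_mem hinj hmem h₁
  have hin₂ := goodFun_preimage_mem hinj hmem h₂
  have main : ∀ n (x y : V) (p : G.Walk x y), p.length ≤ n → p.IsPath →
      x ∈ C₁.verts → y ∈ C₂.verts → False := by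
    intro n
    induction n with
    | zero =>
      intro x y p hl hp hx hy
      cases p with
      | nil => exact hdisj x hx hy
      | cons h q => simp at hl
    | succ n ih =>
      intro x y p hl hp hx hy
      by_cases h1 : ∃ z ∈ p.support, z ≠ x ∧ z ∈ C₁.verts
      · obtain ⟨z, hz, hzx, hz1⟩ := h1
        have hlen := congrArg Walk.length (p.take_spec hz)
        rw [Walk.length_append] at hlen
        have htnil : ¬(p.takeUntil z hz).Nil := Walk.not_nil_of_ne (Ne.symm hzx)
        have ht1 : (p.takeUntil z hz).length ≠ 0 := by
          rwa [Walk.nil_iff_length_eq] at htnil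
        exact ih z y (p.dropUntil z hz) (by omega) (hp.dropUntil hz) hz1 hy
      by_cases h2 : ∃ z ∈ p.support, z ≠ y ∧ z ∈ C₂.verts
      · obtain ⟨z, hz, hzy, hz2⟩ := h2
        have hlen := congrArg Walk.length (p.take_spec hz)
        rw [Walk.length_append] at hlen
        have htnil : ¬(p.dropUntil z hz).Nil := Walk.not_nil_of_ne hzy
        have ht1 : (p.dropUntil z hz).length ≠ 0 := by
          rwa [Walk.nil_iff_length_eq] at htnil
        exact ih x z (p.takeUntil z hz) (by omega) (hp.takeUntil hz) hx hz2
      push_neg at h1 h2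
      cases p with
      | nil => exact hdisj x hx hy
      | @cons _ c _ h q =>
        have hcsup : c ∈ (Walk.cons h q).support := by
          rw [Walk.support_cons]
          exact List.mem_cons_of_mem _ q.start_mem_support
        have hxq : x ∉ q.support := ((Walk.cons_isPath_iff _ _).mp hp).2
        have hcx : c ≠ x := fun hh => hxq (hh ▸ q.start_mem_support)
        have hc1 : c ∉ C₁.verts := h1 c hcsup hcx
        have hfe : f ⟨s(x, c), h⟩ = c := by
          have hm := hmem ⟨s(x, c), h⟩
          rw [Sym2.mem_iff] at hm
          rcases hm with hm | hm
          · exfalso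
            have hE1 : (s(x, c) : Sym2 V) ∈ C₁.edgeSet := hin₁ x hx ⟨s(x, c), h⟩ hm
            exact hc1 (mem_verts_of_mem_edge hE1 c (Sym2.mem_mk_right _ _))
          · exact hm
        exact chain hinj hmem hin₂ q hp.of_cons x h hxq hfe (hdisj x hx) hy
          (fun z hz hzy => h2 z (by
            rw [Walk.support_cons]; exact List.mem_cons_of_mem _ hz) hzy)
  obtain ⟨v₀, hv₀⟩ := h₁.1.nonempty
  obtain ⟨w₀, hw₀⟩ := h₂.1.nonempty
  obtain ⟨p₀⟩ := hconn v₀ w₀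
  exact main p₀.toPath.1.length v₀ w₀ p₀.toPath le_rfl p₀.toPath.2 hv₀ hw₀

lemma cycles_subsingleton (hconn : G.Connected) {f : G.edgeSet → V}
    (hinj : Function.Injective f) (hmem : ∀ e : G.edgeSet, f e ∈ (e : Sym2 V)) :
    {H : G.Subgraph | H.IsCycleSubgraph}.Subsingleton := by
  intro C₁ h₁ C₂ h₂
  rcases Set.eq_empty_or_nonempty (C₁.verts ∩ C₂.verts) with hd | hne
  · exact (not_disjoint_cycles hconn hinj hmem h₁ h₂ hd).elim
  · exact cycles_eq_of_inter hinj hmem h₁ h₂ hne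

lemma connected_delete_edge (H : SimpleGraph V) (hH : H.Connected) {u v : V} (huv : H.Adj u v)
    (hr : (H \ fromEdgeSet {s(u, v)}).Reachable u v) :
    (H \ fromEdgeSet {s(u, v)}).Connected := by
  rw [connected_iff]
  refine ⟨?_, hH.nonempty⟩
  have aux : ∀ {a b : V} (p : H.Walk a b), (H \ fromEdgeSet {s(u, v)}).Reachable a b := by
    intro a b p
    induction p with
    | nil => exact Reachable.refl _
    | @cons a c b h' q ih =>
      refine Reachable.trans ?_ ih
      by_cases hcase : s(a, c) = s(u, v)
      · rw [Sym2.eq_iff] at hcase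
        rcases hcase with ⟨rfl, rfl⟩ | ⟨rfl, rfl⟩
        · exact hr
        · exact hr.symm
      · refine Adj.reachable ?_
        rw [sdiff_adj, fromEdgeSet_adj]
        exact ⟨h', by simp [hcase]⟩
  intro a b
  obtain ⟨p⟩ := hH a b
  exact aux p

lemma exists_tree_le : ∀ (n : ℕ) (H : SimpleGraph V), H.edgeSet.ncard ≤ n → H.Connected →
    ∃ T, T ≤ H ∧ T.IsTree := by
  intro n
  induction n with
  | zero =>
    intro H hcard hconn
    by_cases hac : H.IsAcyclic
    · exact ⟨H, le_rfl, ⟨hconn, hac⟩⟩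
    · exfalso
      simp only [SimpleGraph.IsAcyclic, not_forall, not_not] at hac
      obtain ⟨v, c, hc⟩ := hac
      cases c with
      | nil => exact absurd rfl hc.ne_nil
      | cons h q =>
        have : 0 < H.edgeSet.ncard := by
          rw [Set.ncard_pos (Set.toFinite _)]
          exact ⟨_, H.mem_edgeSet.mpr h⟩
        omega
  | succ n ih =>
    intro H hcard hconn
    by_cases hac : H.IsAcyclic
    · exact ⟨H, le_rfl, ⟨hconn, hac⟩⟩
    · simp only [SimpleGraph.IsAcyclic, not_forall, not_not] at hac
      obtain ⟨v, c, hc⟩ := hac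
      cases c with
      | nil => exact absurd rfl hc.ne_nil
      | @cons _ w _ h q =>
        have hbr : ¬H.IsBridge s(v, w) := by
          rw [isBridge_iff_adj_and_forall_cycle_notMem (H.mem_edgeSet.mpr h)]
          push_neg
          exact ⟨v, Walk.cons h q, hc, by rw [Walk.edges_cons]; exact List.mem_cons_self⟩
        have hr : (H \ fromEdgeSet {s(v, w)}).Reachable v w := by
          by_contra hnr
          exact hbr (isBridge_iff.mpr hnr)
        have hconn' := connected_delete_edge H hconn h hr
        have hEeq : (H \ fromEdgeSet {s(v, w)}).edgeSet = H.edgeSet \ {s(v, w)} := by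
          simp [edgeSet_sdiff, edgeSet_fromEdgeSet]
        have hlt : (H \ fromEdgeSet {s(v, w)}).edgeSet.ncard ≤ n := by
          rw [hEeq]
          have := Set.ncard_diff_singleton_lt_of_mem (H.mem_edgeSet.mpr h) (Set.toFinite _)
          omega
        obtain ⟨T, hT1, hT2⟩ := ih _ hlt hconn'
        exact ⟨T, hT1.trans sdiff_le, hT2⟩

lemma tree_goodFun {T : SimpleGraph V} (hT : T.IsTree) (r : V) :
    ∃ f : T.edgeSet → V, Function.Injective f ∧ (∀ e : T.edgeSet, f e ∈ (e : Sym2 V)) ∧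
      ∀ e, f e ≠ r := by
  classical
  have hpth := hT.existsUnique_path
  set pth : ∀ v, T.Walk v r := fun v => (hpth v r).choose with hpthdef
  have hpath : ∀ v, (pth v).IsPath := fun v => (hpth v r).choose_spec.1
  have huniq : ∀ v (q : T.Walk v r), q.IsPath → q = pth v := fun v q hq =>
    ((hpth v r).choose_spec.2 q hq)
  have key : ∀ e : T.edgeSet, ∃ w, w ≠ r ∧ s(w, (pth w).getVert 1) = (e : Sym2 V) := by
    rintro ⟨e, he⟩
    revert he
    induction e with
    | _ a b =>
      intro he
      have hab : T.Adj a b := T.mem_edgeSet.mp he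
      by_cases hbr : b = r
      · subst hbr
        refine ⟨a, hab.ne, ?_⟩
        have hsingle : (Walk.cons hab Walk.nil).IsPath := by
          simp [Walk.cons_isPath_iff, hab.ne]
        have := huniq a _ hsingle
        rw [← this, Walk.getVert_cons_succ, Walk.getVert_zero]
      · by_cases har : a = r
        · subst har
          refine ⟨b, hab.ne', ?_⟩
          have hsingle : (Walk.cons hab.symm Walk.nil).IsPath := by
            simp [Walk.cons_isPath_iff, hab.ne']
          have := huniq b _ hsingle
          rw [← this, Walk.getVert_cons_succ, Walk.getVert_zero, Sym2.eq_swap]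
        · by_cases hy : b ∈ (pth a).support
          · refine ⟨a, har, ?_⟩
            have htake : ((pth a).takeUntil b hy).IsPath := (hpath a).takeUntil hy
            have hsingle : (Walk.cons hab Walk.nil).IsPath := by
              simp [Walk.cons_isPath_iff, hab.ne]
            have hteq : (pth a).takeUntil b hy = Walk.cons hab Walk.nil :=
              ExistsUnique.unique (hT.existsUnique_path a b) htake hsingle
            have hq : pth a = Walk.cons hab ((pth a).dropUntil b hy) := by
              conv_lhs => rw [← (pth a).take_spec hy]
              rw [hteq, Walk.cons_append, Walk.nil_append]
            rw [hq, Walk.getVert_cons_succ, Walk.getVert_zero]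
          · refine ⟨b, hbr, ?_⟩
            have hpy : (Walk.cons hab.symm (pth a)).IsPath := by
              rw [Walk.cons_isPath_iff]
              exact ⟨hpath a, hy⟩
            have := huniq b _ hpy
            rw [← this, Walk.getVert_cons_succ, Walk.getVert_zero, Sym2.eq_swap]
  choose w hw1 hw2 using key
  refine ⟨w, ?_, ?_, hw1⟩
  · intro e e' h
    apply Subtype.ext
    rw [← hw2 e, ← hw2 e', h]
  · intro e
    rw [← hw2 e]
    exact Sym2.mem_mk_left _ _

lemma goodFun_of_card (hconn : G.Connected) (hn : 2 ≤ Fintype.card V)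
    (hm : G.edgeSet.ncard ≤ Fintype.card V) :
    ∃ f : G.edgeSet → V, Function.Injective f ∧ ∀ e : G.edgeSet, f e ∈ (e : Sym2 V) := by
  classical
  obtain ⟨T, hTle, hTtree⟩ := exists_tree_le G.edgeSet.ncard G le_rfl hconn
  have hTcard : T.edgeSet.ncard + 1 = Fintype.card V := by
    have inst : Fintype T.edgeSet := Fintype.ofFinite _
    have h := hTtree.card_edgeFinset
    rwa [← Set.ncard_coe_finset, SimpleGraph.coe_edgeFinset] at h
  by_cases hsub : G.edgeSet ⊆ T.edgeSet
  · obtain ⟨v₀⟩ := hconn.nonempty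
    obtain ⟨fT, hfinj, hfmem, -⟩ := tree_goodFun hTtree v₀
    refine ⟨fun e => fT ⟨↑e, hsub e.2⟩, ?_, ?_⟩
    · intro e e' h
      exact Subtype.ext (Subtype.mk_eq_mk.mp (hfinj h))
    · intro e
      exact hfmem ⟨↑e, hsub e.2⟩
  · obtain ⟨e₀, he₀G, he₀T⟩ := Set.not_subset.mp hsub
    revert he₀G he₀T
    induction e₀ with
    | _ a b =>
      intro he₀G he₀T
      have hab : G.Adj a b := G.mem_edgeSet.mp he₀G
      have hins : G.edgeSet = insert s(a, b) T.edgeSet := by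
        refine (Set.eq_of_subset_of_ncard_le ?_ ?_ (Set.toFinite _)).symm
        · intro e he
          rcases he with rfl | he
          · exact he₀G
          · exact edgeSet_mono hTle he
        · rw [Set.ncard_insert_of_notMem he₀T (Set.toFinite _)]
          omega
      obtain ⟨fT, hfinj, hfmem, hfne⟩ := tree_goodFun hTtree a
      have hforce : ∀ e : G.edgeSet, (↑e : Sym2 V) ∉ T.edgeSet → (↑e : Sym2 V) = s(a, b) := by
        intro e he
        have := (Set.ext_iff.mp hins (↑e : Sym2 V)).mp e.2
        rcases this with h | h
        · exact h
        · exact absurd h he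
      set F : G.edgeSet → V :=
        (fun e => if h : (↑e : Sym2 V) ∈ T.edgeSet then fT ⟨↑e, h⟩ else a) with hF
      have hFpos : ∀ (e : G.edgeSet) (h : (↑e : Sym2 V) ∈ T.edgeSet), F e = fT ⟨↑e, h⟩ := by
        intro e h
        simp only [hF]
        exact dif_pos h
      have hFneg : ∀ (e : G.edgeSet), (↑e : Sym2 V) ∉ T.edgeSet → F e = a := by
        intro e h
        simp only [hF]
        exact dif_neg h
      refine ⟨F, ?_, ?_⟩
      · intro e e' h
        by_cases h1 : (↑e : Sym2 V) ∈ T.edgeSet <;> by_cases h2 : (↑e' : Sym2 V) ∈ T.edgeSet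
        · rw [hFpos e h1, hFpos e' h2] at h
          exact Subtype.ext (Subtype.mk_eq_mk.mp (hfinj h))
        · rw [hFpos e h1, hFneg e' h2] at h
          exact absurd h (hfne _)
        · rw [hFneg e h1, hFpos e' h2] at h
          exact absurd h.symm (hfne _)
        · exact Subtype.ext ((hforce e h1).trans (hforce e' h2).symm)
      · intro e
        by_cases h1 : (↑e : Sym2 V) ∈ T.edgeSet
        · rw [hFpos e h1]
          exact hfmem ⟨↑e, h1⟩
        · rw [hFneg e h1, hforce e h1]
          exact Sym2.mem_mk_left _ _

lemma mem_edges_start {u b w : V} (q : G.Walk u b) (hq : q.IsPath)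
    (h : s(u, w) ∈ q.edges) : w = q.getVert 1 := by
  cases q with
  | nil => simp at h
  | @cons _ c _ h' q' =>
    rw [Walk.edges_cons, List.mem_cons] at h
    rcases h with h | h
    · rw [Sym2.eq_iff] at h
      rcases h with ⟨-, rfl⟩ | ⟨h1, rfl⟩
      · rw [Walk.getVert_cons_succ, Walk.getVert_zero]
      · exact absurd h1.symm h'.ne'
    · exfalso
      have := Walk.fst_mem_support_of_mem_edges q' h
      exact ((Walk.cons_isPath_iff _ _).mp hq).2 this

lemma start_edge_mem {u b : V} (q : G.Walk u b) (hn : ¬q.Nil) :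
    s(u, q.getVert 1) ∈ q.edges := by
  cases q with
  | nil => exact absurd Walk.Nil.nil hn
  | @cons _ c _ h' q' =>
    rw [Walk.getVert_cons_succ, Walk.getVert_zero, Walk.edges_cons]
    exact List.mem_cons_self

lemma cycle_start_nbr {v : V} (c : G.Walk v v) (hc : c.IsCycle) :
    (c.toSubgraph.neighborSet v).ncard = 2 := by
  cases c with
  | nil => exact absurd rfl hc.ne_nil
  | @cons _ z _ h p =>
    obtain ⟨hp, he⟩ := (Walk.cons_isCycle_iff p h).mp hc
    have hq : p.reverse.IsPath := hp.reverse
    have hqnil : ¬p.reverse.Nil := Walk.not_nil_of_ne h.ne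
    have hzy : z ≠ p.reverse.getVert 1 := by
      intro hzy
      apply he
      have h1 : s(v, p.reverse.getVert 1) ∈ p.reverse.edges := start_edge_mem p.reverse hqnil
      rw [← hzy, Walk.edges_reverse, List.mem_reverse] at h1
      exact h1
    have hset : (Walk.cons h p).toSubgraph.neighborSet v = {z, p.reverse.getVert 1} := by
      ext w
      rw [Subgraph.mem_neighborSet, ← Subgraph.mem_edgeSet, Walk.mem_edges_toSubgraph,
        Walk.edges_cons]
      constructor
      · intro hmem
        rcases List.mem_cons.mp hmem with h1 | h1
        · rw [Sym2.eq_iff] at h1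
          rcases h1 with ⟨-, rfl⟩ | ⟨h2, rfl⟩
          · exact Set.mem_insert _ _
          · exact absurd h2.symm h.ne'
        · have : s(v, w) ∈ p.reverse.edges := by
            rw [Walk.edges_reverse, List.mem_reverse]; exact h1
          right
          exact mem_edges_start p.reverse hq this
      · intro hmem
        rcases hmem with rfl | rfl
        · exact List.mem_cons_self
        · apply List.mem_cons_of_mem
          have := start_edge_mem p.reverse hqnil
          rwa [Walk.edges_reverse, List.mem_reverse] at this
    rw [hset]
    exact Set.ncard_pair hzy

lemma cycle_toSubgraph_cycleSubgraph {v : V} (c : G.Walk v v) (hc : c.IsCycle) :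
    c.toSubgraph.IsCycleSubgraph := by
  classical
  refine ⟨c.toSubgraph_connected, ?_⟩
  intro u hu
  rw [Walk.mem_verts_toSubgraph] at hu
  have := cycle_start_nbr (c.rotate u hu) (hc.rotate hu)
  rwa [Walk.toSubgraph_rotate] at this

lemma card_le_of_cyclesSub (hconn : G.Connected)
    (hsub : {H : G.Subgraph | H.IsCycleSubgraph}.Subsingleton) :
    G.edgeSet.ncard ≤ Fintype.card V := by
  classical
  by_contra hlt
  push_neg at hlt
  obtain ⟨T, hTle, hTtree⟩ := exists_tree_le G.edgeSet.ncard G le_rfl hconn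
  have hTcard : T.edgeSet.ncard + 1 = Fintype.card V := by
    have inst : Fintype T.edgeSet := Fintype.ofFinite _
    have h := hTtree.card_edgeFinset
    rwa [← Set.ncard_coe_finset, SimpleGraph.coe_edgeFinset] at h
  have hdiff : 1 < (G.edgeSet \ T.edgeSet).ncard := by
    rw [Set.ncard_diff (edgeSet_mono hTle) (Set.toFinite _)]
    omega
  obtain ⟨e₁, he₁, e₂, he₂, hne⟩ := (Set.one_lt_ncard (Set.toFinite _)).mp hdiff
  have mk : ∀ e ∈ G.edgeSet \ T.edgeSet, ∃ C : G.Subgraph, C.IsCycleSubgraph ∧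
      e ∈ C.edgeSet ∧ C.edgeSet ⊆ insert e T.edgeSet := by
    intro e he
    revert he
    induction e with
    | _ a b =>
      intro he
      have hadjG : G.Adj a b := G.mem_edgeSet.mp he.1
      obtain ⟨p₀⟩ := hTtree.1 b a
      have hedges : ∀ e' ∈ p₀.toPath.1.edges, e' ∈ G.edgeSet := fun e' he' =>
        edgeSet_mono hTle (p₀.toPath.1.edges_subset_edgeSet he')
      set q := (p₀.toPath.1).transfer G hedges with hqdef
      have hqpath : q.IsPath := (p₀.toPath.2).transfer hedges
      have hqedges : q.edges = p₀.toPath.1.edges := Walk.edges_transfer _ _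
      have hcyc : (Walk.cons hadjG q).IsCycle := by
        rw [Walk.cons_isCycle_iff]
        refine ⟨hqpath, ?_⟩
        intro hmem
        rw [hqedges] at hmem
        exact he.2 (p₀.toPath.1.edges_subset_edgeSet hmem)
      refine ⟨(Walk.cons hadjG q).toSubgraph, cycle_toSubgraph_cycleSubgraph _ hcyc, ?_, ?_⟩
      · rw [Walk.mem_edges_toSubgraph, Walk.edges_cons]
        exact List.mem_cons_self
      · intro x hx
        rw [Walk.mem_edges_toSubgraph, Walk.edges_cons, List.mem_cons] at hx
        rcases hx with rfl | hx
        · exact Set.mem_insert _ _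
        · rw [hqedges] at hx
          exact Set.mem_insert_of_mem _ (p₀.toPath.1.edges_subset_edgeSet hx)
  obtain ⟨C₁, hC₁, he₁C, hsub₁⟩ := mk e₁ he₁
  obtain ⟨C₂, hC₂, he₂C, hsub₂⟩ := mk e₂ he₂
  have : C₁ = C₂ := hsub hC₁ hC₂
  rw [this] at he₁C
  rcases hsub₂ he₁C with h | h
  · exact hne h
  · exact he₁.2 h

end AtMostOneAux
open AtMostOneAux in
/-- For a finite connected simple graph `G` of order `n ≥ 2` and size `m`,
the following are equivalent: (i) `G` contains at most one cycle;
(ii) `β(S(G)) = |S| = m`; (iii) `ρ(S(G)) = |V| = n`. -/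
theorem atMostOneCycle_tfae_matching {V : Type*} [Fintype V] (G : SimpleGraph V)
    (hconn : G.Connected) (hn : 2 ≤ Fintype.card V) :
    List.TFAE
      [ {H : G.Subgraph | H.IsCycleSubgraph}.Subsingleton,
        IsGreatest {k : ℕ | ∃ M : Set (Sym2 (V ⊕ G.edgeSet)),
            M ⊆ (subdivision G).edgeSet ∧
            (∀ e ∈ M, ∀ f ∈ M, e ≠ f → ∀ x, ¬ (x ∈ e ∧ x ∈ f)) ∧
            M.ncard = k}
          G.edgeSet.ncard,
        IsLeast {k : ℕ | ∃ A : Set (Sym2 (V ⊕ G.edgeSet)),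
            A ⊆ (subdivision G).edgeSet ∧
            (∀ x : V ⊕ G.edgeSet, ∃ e ∈ A, x ∈ e) ∧
            A.ncard = k}
          (Fintype.card V) ] := by
  tfae_have 1 → 2 := by
    intro h1
    obtain ⟨f, hinj, hmem⟩ := goodFun_of_card hconn hn (card_le_of_cyclesSub hconn h1)
    constructor
    · exact matching_of_goodFun f hinj hmem
    · rintro k ⟨M, hsub, hdisj, rfl⟩
      exact matching_card_le hsub hdisj
  tfae_have 2 → 3 := by
    intro h2
    obtain ⟨M, hsub, hdisj, hcard⟩ := h2.1
    obtain ⟨f, hinj, hmem⟩ := goodFun_of_matching hsub hdisj hcard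
    constructor
    · exact cover_of_goodFun hconn hn f hinj hmem
    · rintro k ⟨A, hsubA, hcov, rfl⟩
      exact cover_card_ge hsubA hcov
  tfae_have 3 → 1 := by
    intro h3
    obtain ⟨A, hsubA, hcov, hcard⟩ := h3.1
    obtain ⟨f, hinj, hmem⟩ := goodFun_of_cover hsubA hcov hcard
    exact cycles_subsingleton hconn hinj hmem
  tfae_finish
end

section
/- Let G be a finite connected simple graph of order n ≥ 2 and size m, with subdivision graph S(G), and let V denote the set of vertices of S(G) coming from V(G) and S the set of vertices of S(G) coming from E(G). The following statements are equivalent: (i) G contains at least one cycle; (ii) β(S(G)) = |V| = n; (iii) ρ(S(G)) = |S| = m. -/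
section Aux

variable {V : Type*} {G : SimpleGraph V} {a b v w : V}

open SimpleGraph Walk

lemma subdiv_edge_form {e : Sym2 (V ⊕ G.edgeSet)} (he : e ∈ (subdivision G).edgeSet) :
    ∃ (v : V) (ε : G.edgeSet), e = s(Sum.inl v, Sum.inr ε) ∧ v ∈ (ε : Sym2 V) := by
  induction e using Sym2.ind with
  | _ a b =>
    rw [SimpleGraph.mem_edgeSet] at he
    rcases a with v | ε <;> rcases b with w | κ
    · exact absurd he (by simp [subdivision])
    · exact ⟨v, κ, rfl, he⟩
    · exact ⟨w, ε, Sym2.eq_swap, he⟩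
    · exact absurd he (by simp [subdivision])

lemma subdiv_adj (v : V) (ε : G.edgeSet) (h : v ∈ (ε : Sym2 V)) :
    (subdivision G).Adj (Sum.inl v) (Sum.inr ε) := h

lemma sym2_exists_mem (e : Sym2 V) : ∃ x, x ∈ e := by
  induction e using Sym2.ind with
  | _ a b => exact ⟨a, Sym2.mem_mk_left a b⟩

lemma key1_iff_key2 :
    (∃ g : V → G.edgeSet, Function.Injective g ∧ ∀ v : V, v ∈ ((g v : G.edgeSet) : Sym2 V)) ↔
    (∃ f : G.edgeSet → V, Function.Surjective f ∧ ∀ ε : G.edgeSet, f ε ∈ (ε : Sym2 V)) := by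
  classical
  constructor
  · rintro ⟨g, hginj, hgmem⟩
    refine ⟨fun ε => if h : ∃ v, g v = ε then h.choose else (sym2_exists_mem (ε : Sym2 V)).choose,
      ?_, ?_⟩
    · intro v
      refine ⟨g v, ?_⟩
      have h : ∃ w, g w = g v := ⟨v, rfl⟩
      simp only [dif_pos h]
      exact hginj h.choose_spec
    · intro ε
      by_cases h : ∃ v, g v = ε
      · simp only [dif_pos h]
        have h1 : g h.choose = ε := h.choose_spec
        have h2 := hgmem h.choose
        rwa [h1] at h2
      · simp only [dif_neg h]
        exact (sym2_exists_mem (ε : Sym2 V)).choose_spec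
  · rintro ⟨f, hfsurj, hfmem⟩
    refine ⟨fun v => (hfsurj v).choose, ?_, ?_⟩
    · intro v w h
      have hv := (hfsurj v).choose_spec
      have hw := (hfsurj w).choose_spec
      simp only at h
      rw [← hv, ← hw, h]
    · intro v
      have hv := (hfsurj v).choose_spec
      have h2 := hfmem (hfsurj v).choose
      simp only
      rwa [hv] at h2

lemma path_neighborSet_start (p : G.Walk a b) (hp : p.IsPath) (hab : a ≠ b) :
    p.toSubgraph.neighborSet a = {p.getVert 1} := by
  classical
  cases p with
  | nil => exact absurd rfl hab
  | @cons _ x _ h q =>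
    have hq : q.toSubgraph.neighborSet a = ∅ := by
      have hnot : a ∉ q.support := by
        have := hp.support_nodup
        rw [support_cons] at this
        exact (List.nodup_cons.mp this).1
      ext y
      simp only [Set.mem_empty_iff_false, iff_false]
      intro hy
      exact hnot ((q.mem_verts_toSubgraph).mp (SimpleGraph.Subgraph.Adj.fst_mem hy))
    have : (Walk.cons h q).toSubgraph.neighborSet a
        = (G.subgraphOfAdj h).neighborSet a ∪ q.toSubgraph.neighborSet a := by
      simp [SimpleGraph.Subgraph.neighborSet_sup]
    rw [this, hq, Set.union_empty, SimpleGraph.neighborSet_subgraphOfAdj]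
    have hax : a ≠ x := h.ne
    simp [hax]

lemma first_edge_mem (p : G.Walk a b) (hp : ¬p.Nil) : s(a, p.getVert 1) ∈ p.edges := by
  cases p with
  | nil => simp at hp
  | @cons _ x _ h q => simp

lemma cycle_neighborSet_start {c : G.Walk v v} (hc : c.IsCycle) :
    (c.toSubgraph.neighborSet v).ncard = 2 := by
  classical
  cases c with
  | nil => exact absurd hc (IsCycle.not_of_nil)
  | @cons _ u _ h p =>
    rw [cons_isCycle_iff] at hc
    obtain ⟨hpath, hedge⟩ := hc
    have hvu : v ≠ u := h.ne
    have hsplit : (Walk.cons h p).toSubgraph.neighborSet v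
        = (G.subgraphOfAdj h).neighborSet v ∪ p.toSubgraph.neighborSet v := by
      simp [SimpleGraph.Subgraph.neighborSet_sup]
    have h1 : (G.subgraphOfAdj h).neighborSet v = {u} := by
      rw [SimpleGraph.neighborSet_subgraphOfAdj]
      simp [hvu]
    have h2 : p.toSubgraph.neighborSet v = {p.reverse.getVert 1} := by
      rw [← Walk.toSubgraph_reverse]
      exact path_neighborSet_start p.reverse hpath.reverse hvu
    rw [hsplit, h1, h2]
    have hne : u ≠ p.reverse.getVert 1 := by
      intro heq
      apply hedge
      have := first_edge_mem p.reverse (not_nil_of_ne hvu)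
      rw [edges_reverse, List.mem_reverse] at this
      rwa [← heq] at this
    rw [Set.singleton_union]
    exact Set.ncard_pair hne

lemma cycle_toSubgraph_ncard {c : G.Walk v v} (hc : c.IsCycle) (hw : w ∈ c.support) :
    (c.toSubgraph.neighborSet w).ncard = 2 := by
  classical
  rw [← Walk.toSubgraph_rotate c hw]
  exact cycle_neighborSet_start (hc.rotate hw)

lemma key1_to_cycle [Fintype V] (hconn : G.Connected)
    (hkey : ∃ g : V → G.edgeSet, Function.Injective g ∧
      ∀ v : V, v ∈ ((g v : G.edgeSet) : Sym2 V)) :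
    ∃ H : G.Subgraph, H.IsCycleSubgraph := by
  classical
  obtain ⟨g, hginj, -⟩ := hkey
  have hfinE : Finite G.edgeSet := (Set.toFinite _).to_subtype
  have hcard : Fintype.card V ≤ G.edgeSet.ncard := by
    calc Fintype.card V = Nat.card V := Nat.card_eq_fintype_card.symm
      _ ≤ Nat.card G.edgeSet := Nat.card_le_card_of_injective g hginj
      _ = G.edgeSet.ncard := Nat.card_coe_set_eq _
  have hnacyc : ¬G.IsAcyclic := by
    intro hacyc
    have htree : G.IsTree := ⟨hconn, hacyc⟩
    have : Fintype G.edgeSet := Fintype.ofFinite _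
    have h := htree.card_edgeFinset
    have h2 : G.edgeSet.ncard = G.edgeFinset.card := by
      rw [Set.ncard_eq_toFinset_card', SimpleGraph.edgeFinset]
    omega
  rw [SimpleGraph.IsAcyclic] at hnacyc
  push_neg at hnacyc
  obtain ⟨v, c, hc⟩ := hnacyc
  refine ⟨c.toSubgraph, c.toSubgraph_connected.coe, ?_⟩
  intro w hw
  exact cycle_toSubgraph_ncard hc ((c.mem_verts_toSubgraph).mp hw)

lemma cycle_to_key1 [Fintype V] (hconn : G.Connected)
    (hcyc : ∃ H : G.Subgraph, H.IsCycleSubgraph) :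
    ∃ g : V → G.edgeSet, Function.Injective g ∧
      ∀ v : V, v ∈ ((g v : G.edgeSet) : Sym2 V) := by
  classical
  obtain ⟨H, hHconn, hHdeg⟩ := hcyc
  set W := H.verts with hW
  have hfinN : ∀ v : V, (H.neighborSet v).Finite := fun v => Set.toFinite _
  set t : ↥W → Finset (Sym2 V) :=
    fun w => (hfinN w.1).toFinset.image (fun u => s(w.1, u)) with ht
  have hmemt : ∀ (w : ↥W) (e : Sym2 V), e ∈ t w ↔ ∃ u, H.Adj w.1 u ∧ e = s(w.1, u) := by
    intro w e
    simp only [ht, Finset.mem_image, Set.Finite.mem_toFinset, SimpleGraph.Subgraph.mem_neighborSet]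
    constructor
    · rintro ⟨u, hu, rfl⟩; exact ⟨u, hu, rfl⟩
    · rintro ⟨u, hu, rfl⟩; exact ⟨u, hu, rfl⟩
  have htcard : ∀ w : ↥W, (t w).card = 2 := by
    intro w
    rw [ht]
    rw [Finset.card_image_of_injective _ (fun u u' h => Sym2.congr_right.mp h)]
    rw [← Set.ncard_eq_toFinset_card _ (hfinN w.1)]
    exact hHdeg w.1 w.2
  have hHall : ∀ s : Finset ↥W, s.card ≤ (s.biUnion t).card := by
    intro s
    have key := Finset.card_mul_le_card_mul (fun (w : ↥W) (e : Sym2 V) => e ∈ t w)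
      (s := s) (t := s.biUnion t) (m := 2) (n := 2) ?_ ?_
    · omega
    · intro a ha
      have hsub : t a ⊆ (s.biUnion t).bipartiteAbove (fun (w : ↥W) (e : Sym2 V) => e ∈ t w) a := by
        intro e he
        rw [Finset.mem_bipartiteAbove]
        exact ⟨Finset.mem_biUnion.mpr ⟨a, ha, he⟩, he⟩
      calc 2 = (t a).card := (htcard a).symm
        _ ≤ _ := Finset.card_le_card hsub
    · intro e he
      induction e using Sym2.ind with
      | _ x y =>
        have hsub : ∀ w ∈ s.bipartiteBelow (fun (w : ↥W) (e : Sym2 V) => e ∈ t w) s(x, y),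
            (w : V) ∈ ({x, y} : Finset V) := by
          intro w hw
          rw [Finset.mem_bipartiteBelow] at hw
          obtain ⟨u, -, hu⟩ := (hmemt w _).mp hw.2
          have : (w : V) ∈ s(x, y) := hu ▸ Sym2.mem_mk_left _ _
          rw [Sym2.mem_iff] at this
          simpa using this
        calc (s.bipartiteBelow (fun (w : ↥W) (e : Sym2 V) => e ∈ t w) s(x, y)).card
            ≤ ({x, y} : Finset V).card :=
              Finset.card_le_card_of_injOn (fun w => (w : V)) hsub
                (fun w₁ _ w₂ _ h => Subtype.ext h)
          _ ≤ 2 := Finset.card_insert_le x {y} |>.trans (by simp)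
  obtain ⟨g₀, hg₀inj, hg₀⟩ := (Finset.all_card_le_biUnion_card_iff_exists_injective t).mp hHall
  have hg₀spec : ∀ w : ↥W, ∃ u, H.Adj w.1 u ∧ g₀ w = s(w.1, u) := fun w => (hmemt w _).mp (hg₀ w)
  have hg₀edge : ∀ w : ↥W, g₀ w ∈ G.edgeSet := by
    intro w
    obtain ⟨u, hu, he⟩ := hg₀spec w
    rw [he, SimpleGraph.mem_edgeSet]
    exact hu.adj_sub
  have hg₀mem : ∀ w : ↥W, (w : V) ∈ g₀ w := by
    intro w
    obtain ⟨u, hu, he⟩ := hg₀spec w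
    rw [he]; exact Sym2.mem_mk_left _ _
  have hg₀W : ∀ (w : ↥W) (x : V), x ∈ g₀ w → x ∈ W := by
    intro w x hx
    obtain ⟨u, hu, he⟩ := hg₀spec w
    rw [he, Sym2.mem_iff] at hx
    rcases hx with rfl | rfl
    · exact w.2
    · exact hu.snd_mem
  obtain ⟨w₀, hw₀⟩ : W.Nonempty := Set.nonempty_coe_sort.mp hHconn.nonempty
  have hnb : ∀ v : V, v ∉ W → ∃ u, G.Adj v u ∧ G.dist u w₀ < G.dist v w₀ := by
    intro v hv
    have hne : v ≠ w₀ := fun h => hv (h ▸ hw₀)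
    have hreach : G.Reachable v w₀ := hconn.preconnected v w₀
    obtain ⟨p, hp⟩ := hreach.exists_walk_length_eq_dist
    cases p with
    | nil => exact absurd rfl hne
    | @cons _ u _ h q =>
      refine ⟨u, h, ?_⟩
      have h1 : G.dist u w₀ ≤ q.length := SimpleGraph.dist_le q
      rw [Walk.length_cons] at hp
      omega
  choose nb hnbadj hnbd using hnb
  refine ⟨fun v => if h : v ∈ W then ⟨g₀ ⟨v, h⟩, hg₀edge ⟨v, h⟩⟩
    else ⟨s(v, nb v h), (G.mem_edgeSet).mpr (hnbadj v h)⟩, ?_, ?_⟩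
  · intro v w heq
    have hval := congrArg Subtype.val heq
    by_cases hv : v ∈ W <;> by_cases hw' : w ∈ W
    · simp only [dif_pos hv, dif_pos hw'] at hval
      exact congrArg Subtype.val (hg₀inj hval)
    · simp only [dif_pos hv, dif_neg hw'] at hval
      exact absurd (hg₀W ⟨v, hv⟩ w (hval ▸ Sym2.mem_mk_left w (nb w hw'))) hw'
    · simp only [dif_neg hv, dif_pos hw'] at hval
      exact absurd (hg₀W ⟨w, hw'⟩ v (hval ▸ Sym2.mem_mk_left v (nb v hv))) hv
    · simp only [dif_neg hv, dif_neg hw', Sym2.eq, Sym2.rel_iff', Prod.mk.injEq,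
        Prod.swap_prod_mk] at hval
      rcases hval with ⟨h1, -⟩ | ⟨h1, h2⟩
      · exact h1
      · have d1 := hnbd v hv
        have d2 := hnbd w hw'
        rw [h2] at d1
        rw [← h1] at d2
        omega
  · intro v
    by_cases h : v ∈ W
    · simp only [dif_pos h]
      exact hg₀mem ⟨v, h⟩
    · simp only [dif_neg h]
      exact Sym2.mem_mk_left _ _

lemma key1_iff_greatest [Fintype V] :
    IsGreatest {k : ℕ | ∃ M : Set (Sym2 (V ⊕ G.edgeSet)),
        M ⊆ (subdivision G).edgeSet ∧
        (∀ e ∈ M, ∀ f ∈ M, e ≠ f → ∀ x, ¬ (x ∈ e ∧ x ∈ f)) ∧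
        M.ncard = k}
      (Fintype.card V) ↔
    (∃ g : V → G.edgeSet, Function.Injective g ∧ ∀ v : V, v ∈ ((g v : G.edgeSet) : Sym2 V)) := by
  classical
  constructor
  · rintro ⟨⟨M, hMsub, hMdisj, hMcard⟩, -⟩
    have hform : ∀ e : M, ∃ (v : V) (ε : G.edgeSet),
        (e : Sym2 (V ⊕ G.edgeSet)) = s(Sum.inl v, Sum.inr ε) ∧ v ∈ (ε : Sym2 V) :=
      fun e => subdiv_edge_form (hMsub e.2)
    choose ι κ hdecomp hmem using hform
    have hι : Function.Injective ι := by
      intro e₁ e₂ h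
      by_contra hne
      have hne' : (e₁ : Sym2 (V ⊕ G.edgeSet)) ≠ (e₂ : Sym2 (V ⊕ G.edgeSet)) := by
        simpa [Subtype.ext_iff] using hne
      refine hMdisj _ e₁.2 _ e₂.2 hne' (Sum.inl (ι e₁)) ⟨?_, ?_⟩
      · rw [hdecomp e₁]; exact Sym2.mem_mk_left _ _
      · rw [hdecomp e₂, h]; exact Sym2.mem_mk_left _ _
    have hfin : M.Finite := Set.toFinite M
    have hcard : Nat.card M = Fintype.card V := by
      rw [Nat.card_coe_set_eq, hMcard]
    have hbij : Function.Bijective ι := by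
      have : Fintype M := hfin.fintype
      rw [Fintype.bijective_iff_injective_and_card]
      refine ⟨hι, ?_⟩
      calc Fintype.card ↑M = Nat.card ↑M := Nat.card_eq_fintype_card.symm
        _ = Fintype.card V := hcard
    obtain ⟨inv, hinv⟩ := Function.Bijective.surjective hbij |>.hasRightInverse
    refine ⟨fun v => κ (inv v), ?_, ?_⟩
    · intro v w h
      simp only at h
      by_contra hne
      have hinvne : inv v ≠ inv w := fun hc => hne (by rw [← hinv v, ← hinv w, hc])
      have hne' : ((inv v : Sym2 (V ⊕ G.edgeSet))) ≠ (inv w : Sym2 (V ⊕ G.edgeSet)) := by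
        simpa [Subtype.ext_iff] using hinvne
      refine hMdisj _ (inv v).2 _ (inv w).2 hne' (Sum.inr (κ (inv v))) ⟨?_, ?_⟩
      · rw [hdecomp (inv v)]; exact Sym2.mem_mk_right _ _
      · rw [hdecomp (inv w), ← h]; exact Sym2.mem_mk_right _ _
    · intro v
      have h1 := hmem (inv v)
      have h2 : ι (inv v) = v := hinv v
      rwa [h2] at h1
  · rintro ⟨g, hginj, hgmem⟩
    constructor
    · set F : V → Sym2 (V ⊕ G.edgeSet) := fun v => s(Sum.inl v, Sum.inr (g v)) with hF
      have hFinj : Function.Injective F := by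
        intro v w h
        simp only [hF, Sym2.eq, Sym2.rel_iff', Prod.mk.injEq, Prod.swap_prod_mk] at h
        rcases h with ⟨h1, -⟩ | ⟨h1, -⟩
        · exact Sum.inl.injEq v w ▸ h1
        · simp at h1
      refine ⟨Set.range F, ?_, ?_, ?_⟩
      · rintro e ⟨v, rfl⟩
        exact subdiv_adj v (g v) (hgmem v)
      · rintro e ⟨v, rfl⟩ f ⟨w, rfl⟩ hne x ⟨hxe, hxf⟩
        have hvw : v ≠ w := fun hc => hne (by rw [hc])
        simp only [hF, Sym2.mem_iff] at hxe hxf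
        rcases hxe with rfl | rfl <;> rcases hxf with h | h
        · exact hvw (Sum.inl.inj h)
        · exact absurd h (by simp)
        · exact absurd h (by simp)
        · exact hvw (hginj (Sum.inr.inj h))
      · rw [← Nat.card_coe_set_eq, Nat.card_range_of_injective hFinj,
          Nat.card_eq_fintype_card]
    · rintro k ⟨M, hMsub, hMdisj, rfl⟩
      have hform : ∀ e : M, ∃ (v : V) (ε : G.edgeSet),
          (e : Sym2 (V ⊕ G.edgeSet)) = s(Sum.inl v, Sum.inr ε) ∧ v ∈ (ε : Sym2 V) :=
        fun e => subdiv_edge_form (hMsub e.2)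
      choose ι κ hdecomp hmem using hform
      have hι : Function.Injective ι := by
        intro e₁ e₂ h
        by_contra hne
        have hne' : (e₁ : Sym2 (V ⊕ G.edgeSet)) ≠ (e₂ : Sym2 (V ⊕ G.edgeSet)) := by
          simpa [Subtype.ext_iff] using hne
        refine hMdisj _ e₁.2 _ e₂.2 hne' (Sum.inl (ι e₁)) ⟨?_, ?_⟩
        · rw [hdecomp e₁]; exact Sym2.mem_mk_left _ _
        · rw [hdecomp e₂, h]; exact Sym2.mem_mk_left _ _
      calc M.ncard = Nat.card M := (Nat.card_coe_set_eq M).symm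
        _ ≤ Nat.card V := Nat.card_le_card_of_injective ι hι
        _ = Fintype.card V := Nat.card_eq_fintype_card

lemma key2_iff_least [Fintype V] :
    IsLeast {k : ℕ | ∃ A : Set (Sym2 (V ⊕ G.edgeSet)),
        A ⊆ (subdivision G).edgeSet ∧
        (∀ x : V ⊕ G.edgeSet, ∃ e ∈ A, x ∈ e) ∧
        A.ncard = k}
      G.edgeSet.ncard ↔
    (∃ f : G.edgeSet → V, Function.Surjective f ∧ ∀ ε : G.edgeSet, f ε ∈ (ε : Sym2 V)) := by
  classical
  have hfinE : Finite G.edgeSet := Set.toFinite _ |>.to_subtype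
  constructor
  · rintro ⟨⟨A, hAsub, hAcov, hAcard⟩, -⟩
    have hform : ∀ a : A, ∃ (v : V) (ε : G.edgeSet),
        (a : Sym2 (V ⊕ G.edgeSet)) = s(Sum.inl v, Sum.inr ε) ∧ v ∈ (ε : Sym2 V) :=
      fun a => subdiv_edge_form (hAsub a.2)
    choose ι κ hdecomp hmem using hform
    have hj : ∀ ε : G.edgeSet, ∃ a : A, (Sum.inr ε : V ⊕ G.edgeSet) ∈ (a : Sym2 (V ⊕ G.edgeSet)) := by
      intro ε
      obtain ⟨e, heA, hemem⟩ := hAcov (Sum.inr ε)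
      exact ⟨⟨e, heA⟩, hemem⟩
    choose j hjmem using hj
    have hκ : ∀ (ε : G.edgeSet) , κ (j ε) = ε := by
      intro ε
      have := hjmem ε
      rw [hdecomp (j ε), Sym2.mem_iff] at this
      rcases this with h | h
      · exact absurd h (by simp)
      · exact (Sum.inr.inj h).symm
    have hjinj : Function.Injective j := by
      intro ε₁ ε₂ h
      rw [← hκ ε₁, ← hκ ε₂, h]
    have hfinA : A.Finite := Set.toFinite A
    have hjbij : Function.Bijective j := by
      have : Fintype ↑A := hfinA.fintype
      have : Fintype G.edgeSet := Fintype.ofFinite _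
      rw [Fintype.bijective_iff_injective_and_card]
      refine ⟨hjinj, ?_⟩
      calc Fintype.card G.edgeSet = Nat.card G.edgeSet := Nat.card_eq_fintype_card.symm
        _ = G.edgeSet.ncard := Nat.card_coe_set_eq _
        _ = Nat.card ↑A := by rw [← hAcard, Nat.card_coe_set_eq]
        _ = Fintype.card ↑A := Nat.card_eq_fintype_card
    refine ⟨fun ε => ι (j ε), ?_, ?_⟩
    · intro v
      obtain ⟨e, heA, hemem⟩ := hAcov (Sum.inl v)
      obtain ⟨ε', hε'⟩ := hjbij.2 ⟨e, heA⟩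
      refine ⟨ε', ?_⟩
      have h2 : (Sum.inl v : V ⊕ G.edgeSet) ∈ ((⟨e, heA⟩ : A) : Sym2 (V ⊕ G.edgeSet)) := hemem
      rw [← hε', hdecomp (j ε'), Sym2.mem_iff] at h2
      rcases h2 with h | h
      · exact (Sum.inl.inj h).symm
      · exact absurd h (by simp)
    · intro ε
      have h1 := hmem (j ε)
      rwa [hκ ε] at h1
  · rintro ⟨f, hfsurj, hfmem⟩
    constructor
    · set F : G.edgeSet → Sym2 (V ⊕ G.edgeSet) := fun ε => s(Sum.inl (f ε), Sum.inr ε) with hF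
      have hFinj : Function.Injective F := by
        intro ε₁ ε₂ h
        simp only [hF, Sym2.eq, Sym2.rel_iff', Prod.mk.injEq, Prod.swap_prod_mk] at h
        rcases h with ⟨-, h2⟩ | ⟨h1, -⟩
        · exact Sum.inr.inj h2
        · exact absurd h1 (by simp)
      refine ⟨Set.range F, ?_, ?_, ?_⟩
      · rintro e ⟨ε, rfl⟩
        exact subdiv_adj (f ε) ε (hfmem ε)
      · rintro (v | ε)
        · obtain ⟨ε, hε⟩ := hfsurj v
          exact ⟨F ε, ⟨ε, rfl⟩, by rw [hF]; simp [hε]⟩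
        · exact ⟨F ε, ⟨ε, rfl⟩, by rw [hF]; simp⟩
      · rw [← Nat.card_coe_set_eq, Nat.card_range_of_injective hFinj,
          Nat.card_coe_set_eq]
    · rintro k ⟨A, hAsub, hAcov, rfl⟩
      have hform : ∀ a : A, ∃ (v : V) (ε : G.edgeSet),
          (a : Sym2 (V ⊕ G.edgeSet)) = s(Sum.inl v, Sum.inr ε) ∧ v ∈ (ε : Sym2 V) :=
        fun a => subdiv_edge_form (hAsub a.2)
      choose ι κ hdecomp hmem using hform
      have hj : ∀ ε : G.edgeSet, ∃ a : A, (Sum.inr ε : V ⊕ G.edgeSet) ∈ (a : Sym2 (V ⊕ G.edgeSet)) := by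
        intro ε
        obtain ⟨e, heA, hemem⟩ := hAcov (Sum.inr ε)
        exact ⟨⟨e, heA⟩, hemem⟩
      choose j hjmem using hj
      have hκ : ∀ (ε : G.edgeSet) , κ (j ε) = ε := by
        intro ε
        have := hjmem ε
        rw [hdecomp (j ε), Sym2.mem_iff] at this
        rcases this with h | h
        · exact absurd h (by simp)
        · exact (Sum.inr.inj h).symm
      have hjinj : Function.Injective j := by
        intro ε₁ ε₂ h
        rw [← hκ ε₁, ← hκ ε₂, h]
      have : Finite ↑A := (Set.toFinite A).to_subtype
      calc G.edgeSet.ncard = Nat.card G.edgeSet := (Nat.card_coe_set_eq _).symm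
        _ ≤ Nat.card ↑A := Nat.card_le_card_of_injective j hjinj
        _ = A.ncard := Nat.card_coe_set_eq _

end Aux

/-- For a finite connected simple graph `G` of order `n ≥ 2` and size `m`,
the following are equivalent: (i) `G` contains at least one cycle;
(ii) `β(S(G)) = |V| = n`; (iii) `ρ(S(G)) = |S| = m`. -/
theorem atLeastOneCycle_tfae_matching {V : Type*} [Fintype V] (G : SimpleGraph V)
    (hconn : G.Connected) (hn : 2 ≤ Fintype.card V) :
    List.TFAE
      [ ∃ H : G.Subgraph, H.IsCycleSubgraph,
        IsGreatest {k : ℕ | ∃ M : Set (Sym2 (V ⊕ G.edgeSet)),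
            M ⊆ (subdivision G).edgeSet ∧
            (∀ e ∈ M, ∀ f ∈ M, e ≠ f → ∀ x, ¬ (x ∈ e ∧ x ∈ f)) ∧
            M.ncard = k}
          (Fintype.card V),
        IsLeast {k : ℕ | ∃ A : Set (Sym2 (V ⊕ G.edgeSet)),
            A ⊆ (subdivision G).edgeSet ∧
            (∀ x : V ⊕ G.edgeSet, ∃ e ∈ A, x ∈ e) ∧
            A.ncard = k}
          G.edgeSet.ncard ] := by
  tfae_have 1 ↔ 2 := by
    rw [key1_iff_greatest]
    exact ⟨fun h => cycle_to_key1 hconn h, fun h => key1_to_cycle hconn h⟩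
  tfae_have 2 ↔ 3 := by
    rw [key1_iff_greatest, key2_iff_least]
    exact key1_iff_key2
  tfae_finish
end

section
/- Let G be a finite simple graph with subdivision graph S(G). If D is a differential set of S(G) (i.e., a set of vertices of S(G) with ∂(D) = ∂(S(G))), then D is an independent set of S(G). -/
/-- `B(D)`: the set of vertices outside `D` that have a neighbour in `D`. -/
def extBoundary {W : Type*} (H : SimpleGraph W) (D : Set W) : Set W :=
  {v | v ∉ D ∧ ∃ u ∈ D, H.Adj u v}

/-- The differential of a set of vertices: `∂(D) = |B(D)| - |D|`. -/
noncomputable def setDifferential {W : Type*} (H : SimpleGraph W) (D : Set W) : ℤ :=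
  ((extBoundary H D).ncard : ℤ) - (D.ncard : ℤ)

/-- The differential of a graph: `∂(H) = max {∂(D) : D ⊆ V(H)}`. -/
noncomputable def graphDifferential {W : Type*} (H : SimpleGraph W) : ℤ :=
  sSup {x : ℤ | ∃ D : Set W, x = setDifferential H D}


/-- If `D` is a differential set of `S(G)` (a set of vertices with
`∂(D) = ∂(S(G))`), then `D` is an independent set of `S(G)`. -/
theorem differentialSet_subdivision_indep {V : Type*} [Fintype V] (G : SimpleGraph V)
    (D : Set (V ⊕ G.edgeSet))
    (hD : setDifferential (subdivision G) D = graphDifferential (subdivision G)) :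
    ∀ a ∈ D, ∀ b ∈ D, ¬ (subdivision G).Adj a b := by
  classical
  set H := subdivision G with hH
  -- The set of achievable differentials is bounded above.
  have hbdd : BddAbove {x : ℤ | ∃ D : Set (V ⊕ G.edgeSet), x = setDifferential H D} := by
    have hsub : {x : ℤ | ∃ D : Set (V ⊕ G.edgeSet), x = setDifferential H D}
        ⊆ Set.range (setDifferential H) := by
      rintro x ⟨E, rfl⟩; exact ⟨E, rfl⟩
    exact ((Set.finite_range _).subset hsub).bddAbove
  -- Key claim: no vertex-edge pair both in D with incidence.
  have key : ∀ (v : V) (e : G.edgeSet), Sum.inl v ∈ D → Sum.inr e ∈ D →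
      v ∉ (e : Sym2 V) := by
    intro v e hv he hmem
    obtain ⟨u, hu⟩ : ∃ u, (e : Sym2 V) = s(v, u) := Sym2.mem_iff_exists.mp hmem
    set D' : Set (V ⊕ G.edgeSet) := D \ {Sum.inr e} with hD'def
    have hcardD : D'.ncard + 1 = D.ncard := Set.ncard_diff_singleton_add_one he D.toFinite
    -- (B(D) \ {inl u}) ∪ {inr e} ⊆ B(D')
    have hsub : (extBoundary H D \ {Sum.inl u}) ∪ {Sum.inr e} ⊆ extBoundary H D' := by
      rintro w (⟨⟨hw1, x, hx, hadj⟩, hw2⟩ | hw)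
      · refine ⟨fun h => hw1 h.1, ?_⟩
        by_cases hxe : x = Sum.inr e
        · subst hxe
          match w, hadj with
          | Sum.inl v', hadj =>
            have hv' : v' = v ∨ v' = u := by
              have : v' ∈ (e : Sym2 V) := hadj
              rw [hu] at this; simpa using this
            rcases hv' with rfl | rfl
            · exact absurd hv hw1
            · exact absurd rfl hw2
        · exact ⟨x, ⟨hx, hxe⟩, hadj⟩
      · simp only [Set.mem_singleton_iff] at hw
        subst hw
        refine ⟨fun h => h.2 rfl, Sum.inl v, ⟨hv, by simp⟩, ?_⟩
        exact hmem
    -- inr e is not in B(D) \ {inl u}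
    have hnotin : (Sum.inr e : V ⊕ G.edgeSet) ∉ extBoundary H D \ {Sum.inl u} :=
      fun h => h.1.1 he
    have hcard1 : (extBoundary H D \ {Sum.inl u}).ncard + 1 ≤ (extBoundary H D').ncard := by
      have := Set.ncard_le_ncard hsub (extBoundary H D').toFinite
      rwa [Set.ncard_union_eq (by simpa using hnotin)
        ((extBoundary H D).toFinite.diff) (Set.finite_singleton _),
        Set.ncard_singleton] at this
    have hcard2 : (extBoundary H D).ncard ≤ (extBoundary H D \ {Sum.inl u}).ncard + 1 := by
      have hsub2 : extBoundary H D ⊆ (extBoundary H D \ {Sum.inl u}) ∪ {Sum.inl u} := by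
        intro w hw
        by_cases hwu : w = Sum.inl u
        · exact Or.inr (by simp [hwu])
        · exact Or.inl ⟨hw, hwu⟩
      calc (extBoundary H D).ncard
          ≤ ((extBoundary H D \ {Sum.inl u}) ∪ {Sum.inl u}).ncard :=
            Set.ncard_le_ncard hsub2 (Set.Finite.union (Set.Finite.diff (Set.toFinite _))
              (Set.finite_singleton _))
        _ ≤ (extBoundary H D \ {Sum.inl u}).ncard + ({Sum.inl u} : Set _).ncard :=
            Set.ncard_union_le _ _
        _ = (extBoundary H D \ {Sum.inl u}).ncard + 1 := by rw [Set.ncard_singleton]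
    -- so ∂(D') ≥ ∂(D) + 1
    have hgt : setDifferential H D + 1 ≤ setDifferential H D' := by
      unfold setDifferential
      omega
    have hle : setDifferential H D' ≤ graphDifferential H :=
      le_csSup hbdd ⟨D', rfl⟩
    omega
  rintro (v | e) ha (w | f) hb hadj
  · exact hadj
  · exact key v f ha hb hadj
  · exact key w e hb ha hadj
  · exact hadj
end

section
/- Let G be a finite simple graph with subdivision graph S(G). For every set D ⊆ V(G) (viewed also as a set of vertices of S(G) via the inclusion of V(G) into the vertex set of S(G)), one has |B_G(D)| ≤ |B_{S(G)}(D)|, where B_H(D) denotes the external boundary of D in the graph H. -/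
/-- For every `D ⊆ V(G)`, viewed in `S(G)` via the inclusion of `V(G)` into
the vertex set of `S(G)`, one has `|B_G(D)| ≤ |B_{S(G)}(D)|`. -/
theorem extBoundary_le_subdivision {V : Type*} [Fintype V] (G : SimpleGraph V)
    (D : Set V) :
    (extBoundary G D).ncard ≤ (extBoundary (subdivision G) (Sum.inl '' D)).ncard := by
  classical
  set B := extBoundary G D
  have hchoice : ∀ v ∈ B, ∃ u, u ∈ D ∧ G.Adj u v := by
    rintro v ⟨hv, u, hu, huv⟩; exact ⟨u, hu, huv⟩
  choose u hu hadj using hchoice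
  set f : V → (V ⊕ G.edgeSet) := fun v =>
    if h : v ∈ B then Sum.inr ⟨s(u v h, v), G.mem_edgeSet.mpr (hadj v h)⟩
    else Sum.inl v
  apply Set.ncard_le_ncard_of_injOn f
  · intro v hv
    simp only [f, dif_pos hv]
    constructor
    · rintro ⟨w, hw, h⟩; exact Sum.inl_ne_inr h
    · exact ⟨Sum.inl (u v hv), ⟨u v hv, hu v hv, rfl⟩, by
        show u v hv ∈ (s(u v hv, v) : Sym2 V); simp⟩
  · intro a ha b hb hab
    simp only [f, dif_pos ha, dif_pos hb] at hab
    have h2 : s(u a ha, a) = s(u b hb, b) := by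
      simpa using congrArg Subtype.val (Sum.inr_injective hab)
    rcases Sym2.eq_iff.mp h2 with ⟨-, h⟩ | ⟨-, h⟩
    · exact h
    · exact absurd (h ▸ hu b hb) ha.1
end

section
/- Let G be a finite simple graph with subdivision graph S(G). Then ∂(G) ≤ ∂(S(G)), where ∂ denotes the differential of a graph. -/
lemma key_step {V : Type*} [Fintype V] (G : SimpleGraph V) (D : Set V) :
    setDifferential G D ≤ setDifferential (subdivision G) (Sum.inl '' D) := by
  classical
  have hE : Finite (G.edgeSet) := (G.edgeSet.toFinite).to_subtype
  unfold setDifferential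
  have hcard : (Sum.inl '' D : Set (V ⊕ G.edgeSet)).ncard = D.ncard :=
    Set.ncard_image_of_injective D Sum.inl_injective
  rw [hcard]
  have hB : (extBoundary G D).ncard ≤
      (extBoundary (subdivision G) (Sum.inl '' D)).ncard := by
    set f : V → V ⊕ G.edgeSet := fun u =>
      if h : ∃ w ∈ D, G.Adj w u then
        Sum.inr ⟨s(h.choose, u), h.choose_spec.2⟩
      else Sum.inl u with hf
    apply Set.ncard_le_ncard_of_injOn f
    · rintro u ⟨huD, hex⟩
      rw [hf]
      simp only [dif_pos hex]
      refine ⟨?_, ⟨Sum.inl hex.choose, ⟨hex.choose, hex.choose_spec.1, rfl⟩, ?_⟩⟩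
      · rintro ⟨w, -, h⟩; exact Sum.inl_ne_inr h
      · show hex.choose ∈ (s(hex.choose, u) : Sym2 V)
        exact Sym2.mem_mk_left _ _
    · rintro u ⟨huD, hex⟩ u' ⟨huD', hex'⟩ heq
      rw [hf] at heq
      simp only [dif_pos hex, dif_pos hex'] at heq
      have : (s(hex.choose, u) : Sym2 V) = s(hex'.choose, u') := by
        have := Sum.inr_injective heq
        exact congrArg Subtype.val this
      rw [Sym2.eq_iff] at this
      rcases this with ⟨-, h2⟩ | ⟨h1, h2⟩
      · exact h2
      · exact absurd (h2 ▸ hex'.choose_spec.1 : u ∈ D) huD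
  omega

/-- For every finite simple graph `G`, `∂(G) ≤ ∂(S(G))`. -/
theorem differential_le_subdivision {V : Type*} [Fintype V] (G : SimpleGraph V) :
    graphDifferential G ≤ graphDifferential (subdivision G) := by
  classical
  have hE : Finite (G.edgeSet) := (G.edgeSet.toFinite).to_subtype
  unfold graphDifferential
  have hset : {x : ℤ | ∃ D : Set (V ⊕ G.edgeSet), x = setDifferential (subdivision G) D}
      = Set.range (setDifferential (subdivision G)) := by
    ext x; simp [Set.range, eq_comm]
  have hbdd : BddAbove {x : ℤ | ∃ D : Set (V ⊕ G.edgeSet),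
      x = setDifferential (subdivision G) D} := by
    rw [hset]; exact (Set.finite_range _).bddAbove
  refine csSup_le ⟨setDifferential G ∅, ⟨∅, rfl⟩⟩ ?_
  rintro x ⟨D, rfl⟩
  exact le_trans (key_step G D) (le_csSup hbdd ⟨Sum.inl '' D, rfl⟩)
end
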